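/- arXiv:2012.15539 — 4 statements merged into one kernel-verified Lean document; each statement's English description precedes it below -/
import Mathlib

section
/- Let n ≥ 3 and Λ(Y) = Yⁿ + λ_{n-1}Y^{n-1} + … + λ₀ ∈ F_q[X][Y] with λ₀ ≠ 0. Suppose max_{i ≠ n-2} deg λ_i = deg λ_{n-2} ≥ 2·deg λ_{n-1}. If deg λ_{n-2} is odd, then Λ has no root in F_q((X^{-1})) of absolute value > 1. -/
open scoped Classical
set_option linter.unusedVariables false

/-- Embedding of F_q[X] into F_q((X^{-1})): the Laurent-series variable is X^{-1},
so the polynomial variable X maps to the inverse, i.e. to `single (-1) 1`. -/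
noncomputable def polyEmb (Fq : Type) [Field Fq] : Polynomial Fq →+* LaurentSeries Fq :=
  Polynomial.eval₂RingHom HahnSeries.C (HahnSeries.single (-1) 1)

/-- Absolute value |ω| = q^{γ(ω)} on F_q((X^{-1})), where γ(ω) = -order(ω). -/
noncomputable def labs (Fq : Type) [Field Fq] [Fintype Fq] (ω : LaurentSeries Fq) : ℝ :=
  if ω = 0 then 0 else (Fintype.card Fq : ℝ) ^ (-ω.order)

/-- Absolute value |λ| = q^{deg λ} on F_q[X]. -/
noncomputable def pabs (Fq : Type) [Field Fq] [Fintype Fq] (p : Polynomial Fq) : ℝ :=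
  if p = 0 then 0 else (Fintype.card Fq : ℝ) ^ p.natDegree

lemma addVal_polyEmb (Fq : Type) [Field Fq] (p : Polynomial Fq) (hp : p ≠ 0) :
    HahnSeries.addVal ℤ Fq (polyEmb Fq p) = ((-(p.natDegree : ℤ) : ℤ) : WithTop ℤ) := by
  have hrw : polyEmb Fq p
      = ∑ i ∈ Finset.range (p.natDegree + 1), HahnSeries.single (-(i : ℤ)) (p.coeff i) := by
    show Polynomial.eval₂ HahnSeries.C (HahnSeries.single (-1) 1) p = _
    rw [Polynomial.eval₂_eq_sum_range]
    refine Finset.sum_congr rfl fun i _ => ?_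
    rw [HahnSeries.single_pow]
    show HahnSeries.single (0 : ℤ) (p.coeff i) * _ = _
    rw [HahnSeries.single_mul_single]
    simp
  rw [hrw]
  rw [← Finset.sum_erase_add _ _ (Finset.self_mem_range_succ p.natDegree)]
  have hlead : HahnSeries.addVal ℤ Fq (HahnSeries.single (-(p.natDegree : ℤ)) (p.coeff p.natDegree))
      = ((-(p.natDegree : ℤ) : ℤ) : WithTop ℤ) := by
    have hc : p.coeff p.natDegree ≠ 0 := Polynomial.leadingCoeff_ne_zero.mpr hp
    rw [HahnSeries.addVal_apply_of_ne (by simpa using hc), HahnSeries.order_single hc]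
  rw [AddValuation.map_add_eq_of_lt_right]
  · exact hlead
  rw [hlead]
  apply AddValuation.map_lt_sum _ (by simp)
  intro i hi
  rcases Finset.mem_erase.mp hi with ⟨hine, hir⟩
  by_cases hci : p.coeff i = 0
  · rw [hci, HahnSeries.single_eq_zero, AddValuation.map_zero]
    exact WithTop.coe_lt_top _
  · rw [HahnSeries.addVal_apply_of_ne (by simpa using hci), HahnSeries.order_single hci]
    have : i < p.natDegree := lt_of_le_of_ne (Nat.lt_succ_iff.mp (Finset.mem_range.mp hir)) hine
    exact_mod_cast (by omega : -(p.natDegree : ℤ) < -(i:ℤ))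

lemma dom_sum_ne (Fq : Type) [Field Fq] (s : Finset ℕ) (f : ℕ → LaurentSeries Fq) (j : ℕ)
    (hj : j ∈ s) (g : ℤ) (hje : HahnSeries.addVal ℤ Fq (f j) = (g : WithTop ℤ))
    (hlt : ∀ i ∈ s, i ≠ j → (g : WithTop ℤ) < HahnSeries.addVal ℤ Fq (f i)) :
    ∑ i ∈ s, f i ≠ 0 := by
  have h : HahnSeries.addVal ℤ Fq (∑ i ∈ s, f i) = (g : WithTop ℤ) := by
    rw [← Finset.add_sum_erase _ _ hj, AddValuation.map_add_eq_of_lt_left]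
    · exact hje
    rw [hje]
    apply AddValuation.map_lt_sum _ (by simp)
    intro i hi
    exact hlt i (Finset.mem_of_mem_erase hi) (Finset.ne_of_mem_erase hi)
  intro h0
  rw [h0] at h
  simp [HahnSeries.addVal_apply] at h

theorem stmt_8 (Fq : Type) [Field Fq] [Fintype Fq]
    (C : Type) [Field C] [IsAlgClosed C]
    (φL : LaurentSeries Fq →+* C) (abv : AbsoluteValue C ℝ)
    (hna : ∀ x y : C, abv (x + y) ≤ max (abv x) (abv y))
    (hcomp : ∀ f : LaurentSeries Fq, f ≠ 0 → abv (φL f) = (Fintype.card Fq : ℝ) ^ (-f.order))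
    (n : ℕ) (hn : 3 ≤ n) (Λ : Polynomial (Polynomial Fq))
    (hmon : Λ.Monic) (hdeg : Λ.natDegree = n) (h0 : Λ.coeff 0 ≠ 0)
    (hmax : ∀ i < n, i ≠ n - 2 → pabs Fq (Λ.coeff i) ≤ pabs Fq (Λ.coeff (n - 2)))
    (hatt : ∃ i, i < n ∧ i ≠ n - 2 ∧ pabs Fq (Λ.coeff i) = pabs Fq (Λ.coeff (n - 2)))
    (hge : 2 * (Λ.coeff (n - 1)).natDegree ≤ (Λ.coeff (n - 2)).natDegree)
    (hodd : Odd (Λ.coeff (n - 2)).natDegree) :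
    ∀ x : LaurentSeries Fq,
      (Λ.map (φL.comp (polyEmb Fq))).eval (φL x) = 0 → ¬ (1 < abv (φL x)) := by
  intro x hx hgt
  have hq : (1 : ℝ) < (Fintype.card Fq : ℝ) := by exact_mod_cast Fintype.one_lt_card
  -- x ≠ 0
  have hx0 : x ≠ 0 := by
    rintro rfl
    rw [map_zero, map_zero] at hgt
    linarith
  set e : ℤ := x.order with he
  have hd : 0 < -e := by
    rw [hcomp x hx0] at hgt
    rw [show (1:ℝ) = (Fintype.card Fq : ℝ) ^ (0:ℤ) by simp] at hgt
    exact (zpow_lt_zpow_iff_right₀ hq).mp hgt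
  -- the equation in LaurentSeries
  have heval : (Λ.map (polyEmb Fq)).eval x = 0 := by
    apply φL.injective
    rw [map_zero, ← Polynomial.eval₂_at_apply, ← Polynomial.eval_map, Polynomial.map_map]
    exact hx
  have hPdeg : ((Λ.map (polyEmb Fq)) : Polynomial (LaurentSeries Fq)).natDegree = n := by
    rw [hmon.natDegree_map, hdeg]
  have hsum : ∑ i ∈ Finset.range (n+1), polyEmb Fq (Λ.coeff i) * x ^ i = 0 := by
    rw [Polynomial.eval_eq_sum_range, hPdeg] at heval
    simpa [Polynomial.coeff_map] using heval
  -- valuation facts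
  have hvx : HahnSeries.addVal ℤ Fq x = (e : WithTop ℤ) := HahnSeries.addVal_apply_of_ne hx0
  have hvpow : ∀ i : ℕ, HahnSeries.addVal ℤ Fq (x ^ i) = (((i : ℤ) * e : ℤ) : WithTop ℤ) := by
    intro i
    rw [HahnSeries.addVal_apply_of_ne (pow_ne_zero _ hx0), HahnSeries.order_pow]
    norm_num [nsmul_eq_mul]
    rfl
  have hterm : ∀ i : ℕ, Λ.coeff i ≠ 0 →
      HahnSeries.addVal ℤ Fq (polyEmb Fq (Λ.coeff i) * x ^ i)
        = ((-(((Λ.coeff i).natDegree : ℤ)) + (i : ℤ) * e : ℤ) : WithTop ℤ) := by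
    intro i hci
    rw [AddValuation.map_mul, addVal_polyEmb Fq _ hci, hvpow, ← WithTop.coe_add]
  -- λ_{n-2} ≠ 0
  have hm2 : Λ.coeff (n-2) ≠ 0 := by
    intro h
    have h2 := hmax 0 (by omega) (by omega)
    rw [pabs, pabs, if_neg h0, if_pos h] at h2
    have : (0:ℝ) < (Fintype.card Fq : ℝ) ^ (Λ.coeff 0).natDegree := pow_pos (by linarith) _
    linarith
  set m : ℕ := (Λ.coeff (n-2)).natDegree with hm
  have hdegle : ∀ i, i < n → i ≠ n-2 → Λ.coeff i ≠ 0 → (Λ.coeff i).natDegree ≤ m := by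
    intro i h1 h2 h3
    have h4 := hmax i h1 h2
    rw [pabs, pabs, if_neg h3, if_neg hm2] at h4
    exact (pow_le_pow_iff_right₀ hq).mp h4
  have hln : Λ.coeff n = 1 := by rw [← hdeg]; exact hmon.coeff_natDegree
  obtain ⟨t, ht⟩ := hodd
  rcases lt_trichotomy (2*(-e)) (m:ℤ) with hc | hc | hc
  · -- dominant term : index n-2
    refine dom_sum_ne Fq _ _ (n-2) (Finset.mem_range.mpr (by omega))
      (-(m:ℤ) + ((n-2 : ℕ) : ℤ) * e) ?_ ?_ hsum
    · rw [hterm _ hm2]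
    · intro i hi hne
      by_cases hci : Λ.coeff i = 0
      · rw [hci, map_zero, zero_mul, AddValuation.map_zero]
        exact WithTop.coe_lt_top _
      · rw [hterm i hci, WithTop.coe_lt_coe]
        have hn2 : ((n-2 : ℕ) : ℤ) = (n:ℤ) - 2 := by omega
        have hin : i ≤ n := by have := Finset.mem_range.mp hi; omega
        by_cases hin' : i = n
        · rw [hin', hln, Polynomial.natDegree_one]
          have hr : (n:ℤ) * e - ((n-2 : ℕ) : ℤ) * e = 2 * e := by rw [hn2]; ring
          push_cast
          linarith
        · have hiln : i < n := by omega
          by_cases hi1 : i = n-1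
          · have hD2 : 2 * (Λ.coeff i).natDegree ≤ m := hi1 ▸ hge
            have hn1 : (i : ℤ) = (n:ℤ) - 1 := by omega
            have hr : (i:ℤ) * e - ((n-2 : ℕ) : ℤ) * e = e := by rw [hn1, hn2]; ring
            -- need : -(m) + (n-2)e < -D + i e  ⇔  D < m + e
            have hDd : ((Λ.coeff i).natDegree : ℤ) + (-e) < (m:ℤ) := by omega
            linarith
          · -- i ≤ n-3
            have hDm : (Λ.coeff i).natDegree ≤ m := hdegle i hiln hne hci
            have h1 : (1:ℤ) ≤ ((n:ℤ) - 2 - i) := by omega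
            have h2 : (1:ℤ) * (-e) ≤ ((n:ℤ) - 2 - i) * (-e) :=
              mul_le_mul_of_nonneg_right h1 hd.le
            have hr : ((n-2 : ℕ) : ℤ) * e - (i:ℤ) * e = -(((n:ℤ) - 2 - i) * (-e)) := by
              rw [hn2]; ring
            have hDi : ((Λ.coeff i).natDegree : ℤ) ≤ (m:ℤ) := by exact_mod_cast hDm
            linarith
  · -- impossible by parity
    omega
  · -- dominant term : index n
    refine dom_sum_ne Fq _ _ n (Finset.self_mem_range_succ n) ((n:ℤ) * e) ?_ ?_ hsum
    · rw [hterm n (by rw [hln]; exact one_ne_zero), hln]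
      norm_num
    · intro i hi hne
      have hiln : i < n := by have := Finset.mem_range.mp hi; omega
      by_cases hci : Λ.coeff i = 0
      · rw [hci, map_zero, zero_mul, AddValuation.map_zero]
        exact WithTop.coe_lt_top _
      · rw [hterm i hci, WithTop.coe_lt_coe]
        -- need : n e < -D + i e  ⇔  D < (n - i)(-e)
        by_cases hi1 : i = n-1
        · have hD2 : 2 * (Λ.coeff i).natDegree ≤ m := hi1 ▸ hge
          have hn1 : (i : ℤ) = (n:ℤ) - 1 := by omega
          have hr : (n:ℤ) * e - (i:ℤ) * e = -(-e) := by rw [hn1]; ring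
          have hDd : ((Λ.coeff i).natDegree : ℤ) < -e := by omega
          linarith
        · have hDm : (Λ.coeff i).natDegree ≤ m := by
            by_cases hi2 : i = n-2
            · rw [hi2]
            · exact hdegle i hiln hi2 hci
          have h1 : (2:ℤ) ≤ ((n:ℤ) - i) := by omega
          have h2 : (2:ℤ) * (-e) ≤ ((n:ℤ) - i) * (-e) :=
            mul_le_mul_of_nonneg_right h1 hd.le
          have hr : (n:ℤ) * e - (i:ℤ) * e = -(((n:ℤ) - i) * (-e)) := by ring
          have hDi : ((Λ.coeff i).natDegree : ℤ) ≤ (m:ℤ) := by exact_mod_cast hDm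
          linarith
end

section
/- Let n ≥ 3 and Λ(Y) = Yⁿ + λ_{n-1}Y^{n-1} + … + λ₀ ∈ F_q[X][Y]. Suppose Λ has no root in F_q, max_{i < n-3} deg λ_i < deg λ_{n-3} = deg λ_{n-2} ≥ 2·deg λ_{n-1}, and deg λ_{n-2} is odd. Then Λ is irreducible over F_q[X]. -/
open scoped Classical
set_option linter.unusedVariables false

namespace NPAux
open Polynomial
variable {Fq : Type} [Field Fq]

/-- weight of the i-th coefficient at slope t -/
noncomputable def wt (t : ℚ) (p : Polynomial (Polynomial Fq)) (i : ℕ) : ℚ :=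
  ((p.coeff i).natDegree : ℚ) + t * i

lemma wt_zero (p : Polynomial (Polynomial Fq)) (i : ℕ) :
    wt 0 p i = ((p.coeff i).natDegree : ℚ) := by simp [wt]

lemma exists_minA (t : ℚ) {p : Polynomial (Polynomial Fq)} (hp : p ≠ 0) :
    ∃ u, p.coeff u ≠ 0 ∧ (∀ i, p.coeff i ≠ 0 → wt t p i ≤ wt t p u) ∧
      (∀ i, p.coeff i ≠ 0 → i < u → wt t p i < wt t p u) := by
  classical
  have hs : p.support.Nonempty := Polynomial.nonempty_support_iff.mpr hp
  obtain ⟨u₀, hu₀, hmax⟩ := p.support.exists_max_image (fun i => wt t p i) hs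
  set A := p.support.filter (fun i => ∀ j ∈ p.support, wt t p j ≤ wt t p i) with hA
  have hA' : A.Nonempty := ⟨u₀, Finset.mem_filter.mpr ⟨hu₀, hmax⟩⟩
  have humem := A.min'_mem hA'
  rw [Finset.mem_filter] at humem
  refine ⟨A.min' hA', Polynomial.mem_support_iff.mp humem.1, ?_, ?_⟩
  · intro i hi; exact humem.2 i (Polynomial.mem_support_iff.mpr hi)
  · intro i hi hlt
    rcases lt_or_eq_of_le (humem.2 i (Polynomial.mem_support_iff.mpr hi)) with h | h
    · exact h
    · exfalso
      have : i ∈ A := by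
        rw [hA, Finset.mem_filter]
        refine ⟨Polynomial.mem_support_iff.mpr hi, fun j hj => ?_⟩
        rw [h]; exact humem.2 j hj
      exact absurd (A.min'_le i this) (by omega)

lemma exists_maxA (t : ℚ) {p : Polynomial (Polynomial Fq)} (hp : p ≠ 0) :
    ∃ u, p.coeff u ≠ 0 ∧ (∀ i, p.coeff i ≠ 0 → wt t p i ≤ wt t p u) ∧
      (∀ i, p.coeff i ≠ 0 → u < i → wt t p i < wt t p u) := by
  classical
  have hs : p.support.Nonempty := Polynomial.nonempty_support_iff.mpr hp
  obtain ⟨u₀, hu₀, hmax⟩ := p.support.exists_max_image (fun i => wt t p i) hs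
  set A := p.support.filter (fun i => ∀ j ∈ p.support, wt t p j ≤ wt t p i) with hA
  have hA' : A.Nonempty := ⟨u₀, Finset.mem_filter.mpr ⟨hu₀, hmax⟩⟩
  have humem := A.max'_mem hA'
  rw [Finset.mem_filter] at humem
  refine ⟨A.max' hA', Polynomial.mem_support_iff.mp humem.1, ?_, ?_⟩
  · intro i hi; exact humem.2 i (Polynomial.mem_support_iff.mpr hi)
  · intro i hi hlt
    rcases lt_or_eq_of_le (humem.2 i (Polynomial.mem_support_iff.mpr hi)) with h | h
    · exact h
    · exfalso
      have : i ∈ A := by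
        rw [hA, Finset.mem_filter]
        refine ⟨Polynomial.mem_support_iff.mpr hi, fun j hj => ?_⟩
        rw [h]; exact humem.2 j hj
      exact absurd (A.le_max' i this) (by omega)

lemma degree_sum_dominant {α : Type*} [DecidableEq α] {s : Finset α} {f : α → Polynomial Fq} {x₀ : α}
    (hx : x₀ ∈ s) (h0 : f x₀ ≠ 0)
    (h : ∀ x ∈ s, x ≠ x₀ → (f x).degree < (f x₀).degree) :
    (∑ x ∈ s, f x).degree = (f x₀).degree := by
  rw [← Finset.add_sum_erase _ _ hx]
  rcases (s.erase x₀).eq_empty_or_nonempty with he | hne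
  · rw [he, Finset.sum_empty, add_zero]
  · rw [Polynomial.degree_add_eq_left_of_degree_lt]
    apply lt_of_le_of_lt (Polynomial.degree_sum_le _ _)
    rw [Finset.sup_lt_iff (by rw [bot_lt_iff_ne_bot]; simpa using h0)]
    intro b hb
    exact h b (Finset.mem_of_mem_erase hb) (Finset.ne_of_mem_erase hb)

lemma keyMin (t : ℚ) (p q : Polynomial (Polynomial Fq)) (u v : ℕ)
    (hpu : p.coeff u ≠ 0) (hqv : q.coeff v ≠ 0)
    (hp1 : ∀ i, p.coeff i ≠ 0 → wt t p i ≤ wt t p u)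
    (hp2 : ∀ i, p.coeff i ≠ 0 → i < u → wt t p i < wt t p u)
    (hq1 : ∀ i, q.coeff i ≠ 0 → wt t q i ≤ wt t q v)
    (hq2 : ∀ i, q.coeff i ≠ 0 → i < v → wt t q i < wt t q v) :
    (p * q).coeff (u + v) ≠ 0 ∧ wt t (p * q) (u + v) = wt t p u + wt t q v ∧
      (∀ k, (p * q).coeff k ≠ 0 → wt t (p * q) k ≤ wt t p u + wt t q v) ∧
      (∀ k, (p * q).coeff k ≠ 0 → k < u + v → wt t (p * q) k < wt t p u + wt t q v) := by
  classical
  have hterm0 : p.coeff u * q.coeff v ≠ 0 := mul_ne_zero hpu hqv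
  have hdom : ∀ x ∈ Finset.HasAntidiagonal.antidiagonal (u + v), x ≠ (u, v) →
      (p.coeff x.1 * q.coeff x.2).degree < (p.coeff u * q.coeff v).degree := by
    rintro ⟨i, j⟩ hx hne
    rw [Finset.HasAntidiagonal.mem_antidiagonal] at hx
    by_cases hz : p.coeff i * q.coeff j = 0
    · rw [hz, Polynomial.degree_zero]
      exact bot_lt_iff_ne_bot.mpr (by simpa using hterm0)
    · have hpi : p.coeff i ≠ 0 := left_ne_zero_of_mul hz
      have hqj : q.coeff j ≠ 0 := right_ne_zero_of_mul hz
      have hiu : i ≠ u := by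
        rintro rfl; exact hne (by simp at hx ⊢; omega)
      have hw : wt t p i + wt t q j < wt t p u + wt t q v := by
        rcases lt_or_gt_of_ne hiu with h | h
        · exact add_lt_add_of_lt_of_le (hp2 i hpi h) (hq1 j hqj)
        · have hjv : j < v := by omega
          exact add_lt_add_of_le_of_lt (hp1 i hpi) (hq2 j hqj hjv)
      have hnd : (p.coeff i).natDegree + (q.coeff j).natDegree <
          (p.coeff u).natDegree + (q.coeff v).natDegree := by
        have : ((p.coeff i).natDegree : ℚ) + (q.coeff j).natDegree <
            ((p.coeff u).natDegree : ℚ) + (q.coeff v).natDegree := by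
          unfold wt at hw
          have hx' : (i : ℚ) + j = (u : ℚ) + v := by exact_mod_cast congrArg (Nat.cast (R := ℚ)) hx
          have hts : t * (i:ℚ) + t * (j:ℚ) = t * u + t * v := by
            rw [← mul_add, ← mul_add, hx']
          linarith [hw, hts]
        exact_mod_cast this
      apply Polynomial.degree_lt_degree
      rwa [Polynomial.natDegree_mul hpi hqj, Polynomial.natDegree_mul hpu hqv]
  have hcoeffdeg : ((p * q).coeff (u + v)).degree = (p.coeff u * q.coeff v).degree := by
    rw [Polynomial.coeff_mul]
    have := degree_sum_dominant (f := fun x : ℕ × ℕ => p.coeff x.1 * q.coeff x.2) (x₀ := (u,v)) (by simp) hterm0 hdom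
    exact this
  have hc0 : (p * q).coeff (u + v) ≠ 0 := by
    intro h
    rw [h, Polynomial.degree_zero] at hcoeffdeg
    exact hterm0 (Polynomial.degree_eq_bot.mp hcoeffdeg.symm)
  have hwteq : wt t (p * q) (u + v) = wt t p u + wt t q v := by
    have hnd : ((p * q).coeff (u + v)).natDegree = (p.coeff u).natDegree + (q.coeff v).natDegree := by
      have := Polynomial.natDegree_eq_of_degree_eq (hcoeffdeg)
      rwa [Polynomial.natDegree_mul hpu hqv] at this
    unfold wt
    rw [hnd]; push_cast; ring
  have hub : ∀ k, (p * q).coeff k ≠ 0 → ∃ i j, i + j = k ∧ p.coeff i ≠ 0 ∧ q.coeff j ≠ 0 ∧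
      wt t (p * q) k ≤ wt t p i + wt t q j := by
    intro k hk
    have hle : ((p * q).coeff k).degree ≤
        (Finset.HasAntidiagonal.antidiagonal k).sup (fun x => (p.coeff x.1 * q.coeff x.2).degree) := by
      rw [Polynomial.coeff_mul]
      exact Polynomial.degree_sum_le _ _
    have hbot : (⊥ : WithBot ℕ) < ((p * q).coeff k).degree :=
      bot_lt_iff_ne_bot.mpr (by simpa using hk)
    rw [Finset.le_sup_iff hbot] at hle
    obtain ⟨⟨i, j⟩, hmem, hled⟩ := hle
    rw [Finset.HasAntidiagonal.mem_antidiagonal] at hmem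
    have htne : p.coeff i * q.coeff j ≠ 0 := by
      intro h; rw [h, Polynomial.degree_zero, le_bot_iff] at hled
      exact hk (Polynomial.degree_eq_bot.mp hled)
    have hpi : p.coeff i ≠ 0 := left_ne_zero_of_mul htne
    have hqj : q.coeff j ≠ 0 := right_ne_zero_of_mul htne
    refine ⟨i, j, hmem, hpi, hqj, ?_⟩
    have hnd : ((p * q).coeff k).natDegree ≤ (p.coeff i).natDegree + (q.coeff j).natDegree := by
      have := Polynomial.natDegree_le_natDegree hled
      rwa [Polynomial.natDegree_mul hpi hqj] at this
    unfold wt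
    have hcast : ((i : ℚ) + j) = k := by exact_mod_cast congrArg (Nat.cast (R := ℚ)) hmem
    have hnd' : (((p * q).coeff k).natDegree : ℚ) ≤ (p.coeff i).natDegree + (q.coeff j).natDegree := by
      exact_mod_cast hnd
    have hts : t * (i:ℚ) + t * (j:ℚ) = t * k := by rw [← mul_add, hcast]
    linarith [hnd', hts]
  refine ⟨hc0, hwteq, ?_, ?_⟩
  · intro k hk
    obtain ⟨i, j, hij, hpi, hqj, hle⟩ := hub k hk
    exact hle.trans (add_le_add (hp1 i hpi) (hq1 j hqj))
  · intro k hk hklt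
    obtain ⟨i, j, hij, hpi, hqj, hle⟩ := hub k hk
    apply hle.trans_lt
    rcases lt_or_ge i u with h | h
    · exact add_lt_add_of_lt_of_le (hp2 i hpi h) (hq1 j hqj)
    · have hjv : j < v := by omega
      exact add_lt_add_of_le_of_lt (hp1 i hpi) (hq2 j hqj hjv)

lemma keyMax (t : ℚ) (p q : Polynomial (Polynomial Fq)) (u v : ℕ)
    (hpu : p.coeff u ≠ 0) (hqv : q.coeff v ≠ 0)
    (hp1 : ∀ i, p.coeff i ≠ 0 → wt t p i ≤ wt t p u)
    (hp2 : ∀ i, p.coeff i ≠ 0 → u < i → wt t p i < wt t p u)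
    (hq1 : ∀ i, q.coeff i ≠ 0 → wt t q i ≤ wt t q v)
    (hq2 : ∀ i, q.coeff i ≠ 0 → v < i → wt t q i < wt t q v) :
    (p * q).coeff (u + v) ≠ 0 ∧ wt t (p * q) (u + v) = wt t p u + wt t q v ∧
      (∀ k, (p * q).coeff k ≠ 0 → wt t (p * q) k ≤ wt t p u + wt t q v) ∧
      (∀ k, (p * q).coeff k ≠ 0 → u + v < k → wt t (p * q) k < wt t p u + wt t q v) := by
  classical
  have hterm0 : p.coeff u * q.coeff v ≠ 0 := mul_ne_zero hpu hqv
  have hdom : ∀ x ∈ Finset.HasAntidiagonal.antidiagonal (u + v), x ≠ (u, v) →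
      (p.coeff x.1 * q.coeff x.2).degree < (p.coeff u * q.coeff v).degree := by
    rintro ⟨i, j⟩ hx hne
    rw [Finset.HasAntidiagonal.mem_antidiagonal] at hx
    by_cases hz : p.coeff i * q.coeff j = 0
    · rw [hz, Polynomial.degree_zero]
      exact bot_lt_iff_ne_bot.mpr (by simpa using hterm0)
    · have hpi : p.coeff i ≠ 0 := left_ne_zero_of_mul hz
      have hqj : q.coeff j ≠ 0 := right_ne_zero_of_mul hz
      have hiu : i ≠ u := by
        rintro rfl; exact hne (by simp at hx ⊢; omega)
      have hw : wt t p i + wt t q j < wt t p u + wt t q v := by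
        rcases lt_or_gt_of_ne hiu with h | h
        · have hjv : v < j := by omega
          exact add_lt_add_of_le_of_lt (hp1 i hpi) (hq2 j hqj hjv)
        · exact add_lt_add_of_lt_of_le (hp2 i hpi h) (hq1 j hqj)
      have hnd : (p.coeff i).natDegree + (q.coeff j).natDegree <
          (p.coeff u).natDegree + (q.coeff v).natDegree := by
        have : ((p.coeff i).natDegree : ℚ) + (q.coeff j).natDegree <
            ((p.coeff u).natDegree : ℚ) + (q.coeff v).natDegree := by
          unfold wt at hw
          have hx' : (i : ℚ) + j = (u : ℚ) + v := by exact_mod_cast congrArg (Nat.cast (R := ℚ)) hx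
          have hts : t * (i:ℚ) + t * (j:ℚ) = t * u + t * v := by
            rw [← mul_add, ← mul_add, hx']
          linarith [hw, hts]
        exact_mod_cast this
      apply Polynomial.degree_lt_degree
      rwa [Polynomial.natDegree_mul hpi hqj, Polynomial.natDegree_mul hpu hqv]
  have hcoeffdeg : ((p * q).coeff (u + v)).degree = (p.coeff u * q.coeff v).degree := by
    rw [Polynomial.coeff_mul]
    have := degree_sum_dominant (f := fun x : ℕ × ℕ => p.coeff x.1 * q.coeff x.2) (x₀ := (u,v)) (by simp) hterm0 hdom
    exact this
  have hc0 : (p * q).coeff (u + v) ≠ 0 := by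
    intro h
    rw [h, Polynomial.degree_zero] at hcoeffdeg
    exact hterm0 (Polynomial.degree_eq_bot.mp hcoeffdeg.symm)
  have hwteq : wt t (p * q) (u + v) = wt t p u + wt t q v := by
    have hnd : ((p * q).coeff (u + v)).natDegree = (p.coeff u).natDegree + (q.coeff v).natDegree := by
      have := Polynomial.natDegree_eq_of_degree_eq (hcoeffdeg)
      rwa [Polynomial.natDegree_mul hpu hqv] at this
    unfold wt
    rw [hnd]; push_cast; ring
  have hub : ∀ k, (p * q).coeff k ≠ 0 → ∃ i j, i + j = k ∧ p.coeff i ≠ 0 ∧ q.coeff j ≠ 0 ∧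
      wt t (p * q) k ≤ wt t p i + wt t q j := by
    intro k hk
    have hle : ((p * q).coeff k).degree ≤
        (Finset.HasAntidiagonal.antidiagonal k).sup (fun x => (p.coeff x.1 * q.coeff x.2).degree) := by
      rw [Polynomial.coeff_mul]
      exact Polynomial.degree_sum_le _ _
    have hbot : (⊥ : WithBot ℕ) < ((p * q).coeff k).degree :=
      bot_lt_iff_ne_bot.mpr (by simpa using hk)
    rw [Finset.le_sup_iff hbot] at hle
    obtain ⟨⟨i, j⟩, hmem, hled⟩ := hle
    rw [Finset.HasAntidiagonal.mem_antidiagonal] at hmem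
    have htne : p.coeff i * q.coeff j ≠ 0 := by
      intro h; rw [h, Polynomial.degree_zero, le_bot_iff] at hled
      exact hk (Polynomial.degree_eq_bot.mp hled)
    have hpi : p.coeff i ≠ 0 := left_ne_zero_of_mul htne
    have hqj : q.coeff j ≠ 0 := right_ne_zero_of_mul htne
    refine ⟨i, j, hmem, hpi, hqj, ?_⟩
    have hnd : ((p * q).coeff k).natDegree ≤ (p.coeff i).natDegree + (q.coeff j).natDegree := by
      have := Polynomial.natDegree_le_natDegree hled
      rwa [Polynomial.natDegree_mul hpi hqj] at this
    unfold wt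
    have hcast : ((i : ℚ) + j) = k := by exact_mod_cast congrArg (Nat.cast (R := ℚ)) hmem
    have hnd' : (((p * q).coeff k).natDegree : ℚ) ≤ (p.coeff i).natDegree + (q.coeff j).natDegree := by
      exact_mod_cast hnd
    have hts : t * (i:ℚ) + t * (j:ℚ) = t * k := by rw [← mul_add, hcast]
    linarith [hnd', hts]
  refine ⟨hc0, hwteq, ?_, ?_⟩
  · intro k hk
    obtain ⟨i, j, hij, hpi, hqj, hle⟩ := hub k hk
    exact hle.trans (add_le_add (hp1 i hpi) (hq1 j hqj))
  · intro k hk hklt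
    obtain ⟨i, j, hij, hpi, hqj, hle⟩ := hub k hk
    apply hle.trans_lt
    rcases lt_or_ge u i with h | h
    · exact add_lt_add_of_lt_of_le (hp2 i hpi h) (hq1 j hqj)
    · have hjv : v < j := by omega
      exact add_lt_add_of_le_of_lt (hp1 i hpi) (hq2 j hqj hjv)


/-- Bundled structural facts about Λ needed for the argument. -/
structure LF (Fq : Type) [Field Fq] (n m : ℕ) (Λ : Polynomial (Polynomial Fq)) : Prop where
  hn : 3 ≤ n
  hdeg : Λ.natDegree = n
  hm1 : 1 ≤ m
  hmodd : Odd m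
  hne3 : Λ.coeff (n-3) ≠ 0
  hne2 : Λ.coeff (n-2) ≠ 0
  hc0 : Λ.coeff 0 ≠ 0
  hcn : Λ.coeff n = 1
  hm2 : (Λ.coeff (n-2)).natDegree = m
  hm3 : (Λ.coeff (n-3)).natDegree = m
  hL : Λ ≠ 0
  Aeq : wt ((m:ℚ)/2) Λ (n-2) = wt ((m:ℚ)/2) Λ n
  Atop : ∀ k, Λ.coeff k ≠ 0 → wt ((m:ℚ)/2) Λ k ≤ wt ((m:ℚ)/2) Λ n
  Alow : ∀ k, Λ.coeff k ≠ 0 → k < n-2 → wt ((m:ℚ)/2) Λ k < wt ((m:ℚ)/2) Λ n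
  Bt : ∀ k, Λ.coeff k ≠ 0 → (Λ.coeff k).natDegree ≤ m
  Blow : ∀ k, Λ.coeff k ≠ 0 → k < n-3 → (Λ.coeff k).natDegree < m
  Bhigh : ∀ k, Λ.coeff k ≠ 0 → n-2 < k → (Λ.coeff k).natDegree < m
  noroot : ∀ c : Fq, Λ.eval (Polynomial.C c) ≠ 0

variable {n m : ℕ} {Λ g h : Polynomial (Polynomial Fq)}

/-- the min-attaining index at slope m/2 of a product is n-2 -/
lemma minIdx1 (F : LF Fq n m Λ) (hab : Λ = g * h) {ug uh : ℕ}
    (hgu : g.coeff ug ≠ 0) (hhu : h.coeff uh ≠ 0)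
    (hg1 : ∀ i, g.coeff i ≠ 0 → wt ((m:ℚ)/2) g i ≤ wt ((m:ℚ)/2) g ug)
    (hg2 : ∀ i, g.coeff i ≠ 0 → i < ug → wt ((m:ℚ)/2) g i < wt ((m:ℚ)/2) g ug)
    (hh1 : ∀ i, h.coeff i ≠ 0 → wt ((m:ℚ)/2) h i ≤ wt ((m:ℚ)/2) h uh)
    (hh2 : ∀ i, h.coeff i ≠ 0 → i < uh → wt ((m:ℚ)/2) h i < wt ((m:ℚ)/2) h uh) :
    ug + uh = n - 2 ∧ wt ((m:ℚ)/2) Λ (n-2) = wt ((m:ℚ)/2) g ug + wt ((m:ℚ)/2) h uh := by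
  obtain ⟨K0, K1, K2, K3⟩ := keyMin ((m:ℚ)/2) g h ug uh hgu hhu hg1 hg2 hh1 hh2
  rw [← hab] at K0 K1 K2 K3
  have e1 : wt ((m:ℚ)/2) Λ (n-2) ≤ wt ((m:ℚ)/2) Λ (ug+uh) := by
    rw [K1]; exact K2 _ F.hne2
  have e2 : wt ((m:ℚ)/2) Λ (ug+uh) ≤ wt ((m:ℚ)/2) Λ (n-2) := by
    rw [F.Aeq]; exact F.Atop _ K0
  have hnot1 : ¬ (ug + uh < n - 2) := by
    intro hlt
    have := F.Alow _ K0 hlt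
    rw [← F.Aeq] at this
    linarith [e1, e2, this]
  have hnot2 : ¬ (n - 2 < ug + uh) := by
    intro hlt
    have := K3 _ F.hne2 hlt
    rw [← K1] at this
    linarith [e1, this]
  have heq : ug + uh = n - 2 := by omega
  refine ⟨heq, ?_⟩
  rw [← heq, K1]

/-- the max-attaining index at slope m/2 of a product is n -/
lemma maxIdx1 (F : LF Fq n m Λ) (hab : Λ = g * h) {vg vh : ℕ}
    (hgu : g.coeff vg ≠ 0) (hhu : h.coeff vh ≠ 0)
    (hg1 : ∀ i, g.coeff i ≠ 0 → wt ((m:ℚ)/2) g i ≤ wt ((m:ℚ)/2) g vg)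
    (hg2 : ∀ i, g.coeff i ≠ 0 → vg < i → wt ((m:ℚ)/2) g i < wt ((m:ℚ)/2) g vg)
    (hh1 : ∀ i, h.coeff i ≠ 0 → wt ((m:ℚ)/2) h i ≤ wt ((m:ℚ)/2) h vh)
    (hh2 : ∀ i, h.coeff i ≠ 0 → vh < i → wt ((m:ℚ)/2) h i < wt ((m:ℚ)/2) h vh) :
    vg + vh = n ∧ wt ((m:ℚ)/2) Λ n = wt ((m:ℚ)/2) g vg + wt ((m:ℚ)/2) h vh := by
  obtain ⟨K0, K1, K2, K3⟩ := keyMax ((m:ℚ)/2) g h vg vh hgu hhu hg1 hg2 hh1 hh2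
  rw [← hab] at K0 K1 K2 K3
  have hcn : Λ.coeff n ≠ 0 := by rw [F.hcn]; exact one_ne_zero
  have e1 : wt ((m:ℚ)/2) Λ n ≤ wt ((m:ℚ)/2) Λ (vg+vh) := by
    rw [K1]; exact K2 _ hcn
  have e2 : wt ((m:ℚ)/2) Λ (vg+vh) ≤ wt ((m:ℚ)/2) Λ n := F.Atop _ K0
  have hle : vg + vh ≤ n := by
    have := Polynomial.le_natDegree_of_ne_zero K0
    rw [F.hdeg] at this
    omega
  have hnot : ¬ (vg + vh < n) := by
    intro hlt
    have := K3 _ hcn hlt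
    rw [← K1] at this
    linarith [e1, this]
  have heq : vg + vh = n := by omega
  refine ⟨heq, ?_⟩
  rw [← heq, K1]

/-- the min-attaining index at slope 0 of a product is n-3 -/
lemma minIdx0 (F : LF Fq n m Λ) (hab : Λ = g * h) {zg zh : ℕ}
    (hgu : g.coeff zg ≠ 0) (hhu : h.coeff zh ≠ 0)
    (hg1 : ∀ i, g.coeff i ≠ 0 → wt 0 g i ≤ wt 0 g zg)
    (hg2 : ∀ i, g.coeff i ≠ 0 → i < zg → wt 0 g i < wt 0 g zg)
    (hh1 : ∀ i, h.coeff i ≠ 0 → wt 0 h i ≤ wt 0 h zh)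
    (hh2 : ∀ i, h.coeff i ≠ 0 → i < zh → wt 0 h i < wt 0 h zh) :
    zg + zh = n - 3 := by
  obtain ⟨K0, K1, K2, K3⟩ := keyMin 0 g h zg zh hgu hhu hg1 hg2 hh1 hh2
  rw [← hab] at K0 K1 K2 K3
  have e1 : wt 0 Λ (n-3) ≤ wt 0 Λ (zg+zh) := by
    rw [K1]; exact K2 _ F.hne3
  have e2 : wt 0 Λ (zg+zh) ≤ wt 0 Λ (n-3) := by
    rw [wt_zero, wt_zero, F.hm3]
    exact_mod_cast F.Bt _ K0
  have hnot1 : ¬ (zg + zh < n - 3) := by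
    intro hlt
    have := F.Blow _ K0 hlt
    have h3 : wt 0 Λ (zg+zh) < wt 0 Λ (n-3) := by
      rw [wt_zero, wt_zero, F.hm3]; exact_mod_cast this
    linarith [e1, h3]
  have hnot2 : ¬ (n - 3 < zg + zh) := by
    intro hlt
    have := K3 _ F.hne3 hlt
    rw [← K1] at this
    linarith [e1, this]
  omega

/-- the max-attaining index at slope 0 of a product is n-2, with value equation -/
lemma maxIdx0 (F : LF Fq n m Λ) (hab : Λ = g * h) {wg wh : ℕ}
    (hgu : g.coeff wg ≠ 0) (hhu : h.coeff wh ≠ 0)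
    (hg1 : ∀ i, g.coeff i ≠ 0 → wt 0 g i ≤ wt 0 g wg)
    (hg2 : ∀ i, g.coeff i ≠ 0 → wg < i → wt 0 g i < wt 0 g wg)
    (hh1 : ∀ i, h.coeff i ≠ 0 → wt 0 h i ≤ wt 0 h wh)
    (hh2 : ∀ i, h.coeff i ≠ 0 → wh < i → wt 0 h i < wt 0 h wh) :
    wg + wh = n - 2 ∧ (g.coeff wg).natDegree + (h.coeff wh).natDegree = m := by
  obtain ⟨K0, K1, K2, K3⟩ := keyMax 0 g h wg wh hgu hhu hg1 hg2 hh1 hh2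
  rw [← hab] at K0 K1 K2 K3
  have e1 : wt 0 Λ (n-2) ≤ wt 0 Λ (wg+wh) := by
    rw [K1]; exact K2 _ F.hne2
  have e2 : wt 0 Λ (wg+wh) ≤ wt 0 Λ (n-2) := by
    rw [wt_zero, wt_zero, F.hm2]
    exact_mod_cast F.Bt _ K0
  have hnot1 : ¬ (wg + wh < n - 2) := by
    intro hlt
    have := K3 _ F.hne2 hlt
    rw [← K1] at this
    linarith [e1, this]
  have hnot2 : ¬ (n - 2 < wg + wh) := by
    intro hlt
    have := F.Bhigh _ K0 hlt
    have h3 : wt 0 Λ (wg+wh) < wt 0 Λ (n-2) := by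
      rw [wt_zero, wt_zero, F.hm2]; exact_mod_cast this
    linarith [e1, h3]
  have heq : wg + wh = n - 2 := by omega
  refine ⟨heq, ?_⟩
  rw [heq, wt_zero, wt_zero, wt_zero, F.hm2] at K1
  exact_mod_cast K1.symm


/-- If `g` attains its slope-(m/2) maximum only at its top index, contradiction. -/
lemma aux2 (F : LF Fq n m Λ) (hab : Λ = g * h) (hg : g.Monic) (hh : h.Monic)
    (hr : 1 ≤ g.natDegree) (hs : 1 ≤ h.natDegree) (hrs : g.natDegree + h.natDegree = n)
    (hside : ∀ i, g.coeff i ≠ 0 → i < g.natDegree →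
      wt ((m:ℚ)/2) g i < wt ((m:ℚ)/2) g g.natDegree) : False := by
  classical
  set r := g.natDegree with hrdef
  set s := h.natDegree with hsdef
  have hg0 : g ≠ 0 := hg.ne_zero
  have hh0 : h ≠ 0 := hh.ne_zero
  have hgr1 : g.coeff r = 1 := hg.coeff_natDegree
  have hgr : g.coeff r ≠ 0 := by rw [hgr1]; exact one_ne_zero
  have hhs1 : h.coeff s = 1 := hh.coeff_natDegree
  have hg1 : ∀ i, g.coeff i ≠ 0 → wt ((m:ℚ)/2) g i ≤ wt ((m:ℚ)/2) g r := by
    intro i hi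
    rcases lt_trichotomy i r with hlt | heq | hgt
    · exact (hside i hi hlt).le
    · rw [heq]
    · exact absurd (Polynomial.le_natDegree_of_ne_zero hi) (by omega)
  have hg2max : ∀ i, g.coeff i ≠ 0 → r < i → wt ((m:ℚ)/2) g i < wt ((m:ℚ)/2) g r := by
    intro i hi hgt
    exact absurd (Polynomial.le_natDegree_of_ne_zero hi) (by omega)
  obtain ⟨uh, huh, hu1, hu2⟩ := exists_minA ((m:ℚ)/2) hh0
  obtain ⟨vh, hvh, hv1, hv2⟩ := exists_maxA ((m:ℚ)/2) hh0
  obtain ⟨hmin1, hval1⟩ := minIdx1 F hab hgr huh hg1 hside hu1 hu2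
  obtain ⟨hmax1, hval2⟩ := maxIdx1 F hab hgr hvh hg1 hg2max hv1 hv2
  have hvhs : vh = s := by
    have := Polynomial.le_natDegree_of_ne_zero hvh
    omega
  have huhle : uh ≤ s := Polynomial.le_natDegree_of_ne_zero huh
  have huheq : uh = s - 2 ∧ 2 ≤ s := by omega
  -- value of the min-attaining coefficient of h
  have hwteq : wt ((m:ℚ)/2) h uh = wt ((m:ℚ)/2) h vh :=
    le_antisymm (hv1 uh huh) (hu1 vh hvh)
  have hDh : (h.coeff uh).natDegree = m := by
    have h1 : ((h.coeff uh).natDegree : ℚ) + (m:ℚ)/2 * uh = (m:ℚ)/2 * s := by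
      have := hwteq
      rw [hvhs] at this
      unfold wt at this
      rw [hsdef, hhs1] at this
      simpa using this
    have hsu : (s:ℚ) = (uh:ℚ) + 2 := by exact_mod_cast (by omega : s = uh + 2)
    have : ((h.coeff uh).natDegree : ℚ) = m := by
      rw [hsu] at h1; linarith
    exact_mod_cast this
  -- slope 0 analysis
  obtain ⟨wg, hwg, hw1, hw2⟩ := exists_maxA 0 hg0
  obtain ⟨wh, hwh, hw1', hw2'⟩ := exists_maxA 0 hh0
  obtain ⟨zg, hzg, hz1, hz2⟩ := exists_minA 0 hg0
  obtain ⟨zh, hzh, hz1', hz2'⟩ := exists_minA 0 hh0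
  obtain ⟨hidx0, hval0⟩ := maxIdx0 F hab hwg hwh hw1 hw2 hw1' hw2'
  have hDh' : m ≤ (h.coeff wh).natDegree := by
    have := hw1' uh huh
    rw [wt_zero, wt_zero, hDh] at this
    exact_mod_cast this
  have hDg0 : (g.coeff wg).natDegree = 0 := by omega
  have hM0g : ∀ i, g.coeff i ≠ 0 → (g.coeff i).natDegree = 0 := by
    intro i hi
    have := hw1 i hi
    rw [wt_zero, wt_zero, hDg0] at this
    have : ((g.coeff i).natDegree : ℚ) ≤ 0 := by simpa using this
    exact_mod_cast le_antisymm this (by positivity)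
  have hgc0 : g.coeff 0 ≠ 0 := by
    have : Λ.coeff 0 = g.coeff 0 * h.coeff 0 := by rw [hab, Polynomial.mul_coeff_zero]
    intro hz
    exact F.hc0 (by rw [this, hz, zero_mul])
  have hwgr : wg = r := by
    by_contra hne
    have hwgle : wg ≤ r := Polynomial.le_natDegree_of_ne_zero hwg
    have hlt : wg < r := by omega
    have := hw2 r hgr hlt
    rw [wt_zero, wt_zero, hDg0, hrdef, hgr1] at this
    simp at this
  have hzg0 : zg = 0 := by
    by_contra hne
    have := hz2 0 hgc0 (by omega)
    rw [wt_zero, wt_zero, hM0g 0 hgc0, hM0g zg hzg] at this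
    simp at this
  have hidxz := minIdx0 F hab hzg hzh hz1 hz2 hz1' hz2'
  have hzhwh : zh ≤ wh := by
    by_contra hne
    have := hw2' zh hzh (by omega)
    have h2 := hz1' wh hwh
    linarith
  -- conclude r = 1
  have hr1 : r = 1 := by omega
  -- extract the root
  have hgeq : g = Polynomial.X + Polynomial.C (g.coeff 0) := hg.eq_X_add_C hr1
  have hc : g.coeff 0 = Polynomial.C ((g.coeff 0).coeff 0) :=
    Polynomial.eq_C_of_natDegree_eq_zero (hM0g 0 hgc0)
  set c := (g.coeff 0).coeff 0 with hcdef
  apply F.noroot (-c)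
  rw [hab, Polynomial.eval_mul]
  have : g.eval (Polynomial.C (-c)) = 0 := by
    rw [hgeq, hc]
    simp [Polynomial.eval_add, Polynomial.eval_X, Polynomial.eval_C]
  rw [this, zero_mul]

/-- no nontrivial monic factorization -/
lemma noFactor (F : LF Fq n m Λ) (hab : Λ = g * h) (hg : g.Monic) (hh : h.Monic)
    (hr : 1 ≤ g.natDegree) (hs : 1 ≤ h.natDegree)
    (hrs : g.natDegree + h.natDegree = n) : False := by
  classical
  set r := g.natDegree with hrdef
  set s := h.natDegree with hsdef
  have hg0 : g ≠ 0 := hg.ne_zero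
  have hh0 : h ≠ 0 := hh.ne_zero
  obtain ⟨ug, hug, hug1, hug2⟩ := exists_minA ((m:ℚ)/2) hg0
  obtain ⟨uh, huh, huh1, huh2⟩ := exists_minA ((m:ℚ)/2) hh0
  obtain ⟨vg, hvg, hvg1, hvg2⟩ := exists_maxA ((m:ℚ)/2) hg0
  obtain ⟨vh, hvh, hvh1, hvh2⟩ := exists_maxA ((m:ℚ)/2) hh0
  obtain ⟨hmin1, _⟩ := minIdx1 F hab hug huh hug1 hug2 huh1 huh2
  obtain ⟨hmax1, _⟩ := maxIdx1 F hab hvg hvh hvg1 hvg2 hvh1 hvh2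
  have hvgr : vg = r ∧ vh = s := by
    have h1 := Polynomial.le_natDegree_of_ne_zero hvg
    have h2 := Polynomial.le_natDegree_of_ne_zero hvh
    omega
  have hugle : ug ≤ r := Polynomial.le_natDegree_of_ne_zero hug
  have huhle : uh ≤ s := Polynomial.le_natDegree_of_ne_zero huh
  -- value equalities
  have hwg : wt ((m:ℚ)/2) g ug = wt ((m:ℚ)/2) g vg :=
    le_antisymm (hvg1 ug hug) (hug1 vg hvg)
  have hwh : wt ((m:ℚ)/2) h uh = wt ((m:ℚ)/2) h vh :=
    le_antisymm (hvh1 uh huh) (huh1 vh hvh)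
  -- parity
  have hpg : 2 * (g.coeff ug).natDegree = m * (r - ug) := by
    have h1 : ((g.coeff ug).natDegree : ℚ) + (m:ℚ)/2 * ug = (m:ℚ)/2 * r := by
      have := hwg
      rw [hvgr.1] at this
      unfold wt at this
      rw [hrdef, hg.coeff_natDegree] at this
      simpa using this
    have hcast : ((r - ug : ℕ):ℚ) = (r:ℚ) - ug := by
      rw [Nat.cast_sub hugle]
    have : (2 * (g.coeff ug).natDegree : ℚ) = (m:ℚ) * ((r - ug : ℕ):ℚ) := by
      rw [hcast]; push_cast; linarith
    exact_mod_cast this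
  have hph : 2 * (h.coeff uh).natDegree = m * (s - uh) := by
    have h1 : ((h.coeff uh).natDegree : ℚ) + (m:ℚ)/2 * uh = (m:ℚ)/2 * s := by
      have := hwh
      rw [hvgr.2] at this
      unfold wt at this
      rw [hsdef, hh.coeff_natDegree] at this
      simpa using this
    have hcast : ((s - uh : ℕ):ℚ) = (s:ℚ) - uh := by
      rw [Nat.cast_sub huhle]
    have : (2 * (h.coeff uh).natDegree : ℚ) = (m:ℚ) * ((s - uh : ℕ):ℚ) := by
      rw [hcast]; push_cast; linarith
    exact_mod_cast this
  obtain ⟨k, hk⟩ := F.hmodd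
  have hn := F.hn
  have hsum2 : (r - ug) + (s - uh) = 2 := by omega
  have hcase : ug = r ∨ uh = s := by
    rcases (by omega : r - ug = 0 ∨ r - ug = 1 ∨ r - ug = 2) with h1 | h1 | h1
    · left; omega
    · exfalso; rw [h1, mul_one] at hpg; omega
    · right; omega
  rcases hcase with hcase | hcase
  · exact aux2 F hab hg hh hr hs hrs (fun i hi hlt => by
      rw [← hrdef] at *
      have := hug2 i hi (by omega)
      rwa [hcase] at this)
  · have hab' : Λ = h * g := by rw [hab, mul_comm]
    exact aux2 F hab' hh hg hs hr (by omega) (fun i hi hlt => by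
      rw [← hsdef] at *
      have := huh2 i hi (by omega)
      rwa [hcase] at this)

end NPAux


set_option maxHeartbeats 1000000 in
theorem stmt_15 (Fq : Type) [Field Fq] [Fintype Fq]
    (n : ℕ) (hn : 3 ≤ n) (Λ : Polynomial (Polynomial Fq))
    (hmon : Λ.Monic) (hdeg : Λ.natDegree = n)
    (hnoroot : ∀ c : Fq, Λ.eval (Polynomial.C c) ≠ 0)
    (hmax : ∀ i < n - 3, pabs Fq (Λ.coeff i) < pabs Fq (Λ.coeff (n - 3)))
    (hne3 : Λ.coeff (n - 3) ≠ 0) (hne2 : Λ.coeff (n - 2) ≠ 0)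
    (heq : (Λ.coeff (n - 3)).natDegree = (Λ.coeff (n - 2)).natDegree)
    (hge : 2 * (Λ.coeff (n - 1)).natDegree ≤ (Λ.coeff (n - 2)).natDegree)
    (hodd : Odd (Λ.coeff (n - 2)).natDegree) :
    Irreducible Λ := by
  classical
  open NPAux in
  set m := (Λ.coeff (n - 2)).natDegree with hmdef
  have hm1 : 1 ≤ m := by
    rcases hodd with ⟨k, hk⟩; omega
  have hL0 : Λ ≠ 0 := hmon.ne_zero
  have hcn : Λ.coeff n = 1 := by rw [← hdeg]; exact hmon.coeff_natDegree
  have hc0 : Λ.coeff 0 ≠ 0 := by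
    have := hnoroot 0
    rw [Polynomial.C_0] at this
    rwa [Polynomial.coeff_zero_eq_eval_zero]
  have hcard : (1:ℝ) < (Fintype.card Fq : ℝ) := by
    exact_mod_cast Fintype.one_lt_card
  have hmax' : ∀ i, i < n - 3 → Λ.coeff i ≠ 0 → (Λ.coeff i).natDegree < m := by
    intro i hi hne
    have := hmax i hi
    unfold pabs at this
    rw [if_neg hne, if_neg hne3] at this
    have hlt := (pow_lt_pow_iff_right₀ hcard).mp this
    omega
  have hd1 : 2 * (Λ.coeff (n-1)).natDegree ≤ m := hge
  have hle_n : ∀ k, Λ.coeff k ≠ 0 → k ≤ n := by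
    intro k hk
    have := Polynomial.le_natDegree_of_ne_zero hk
    omega
  have hm3 : (Λ.coeff (n-3)).natDegree = m := heq
  -- casts
  have hcN3 : ((n - 3 : ℕ) : ℚ) = (n:ℚ) - 3 := by rw [Nat.cast_sub hn]; norm_num
  have hcN2 : ((n - 2 : ℕ) : ℚ) = (n:ℚ) - 2 := by rw [Nat.cast_sub (by omega)]; norm_num
  have hcN1 : ((n - 1 : ℕ) : ℚ) = (n:ℚ) - 1 := by rw [Nat.cast_sub (by omega)]; norm_num
  have hM1 : (1:ℚ) ≤ (m:ℚ) := by exact_mod_cast hm1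
  -- slope m/2 facts
  have hwtn : wt ((m:ℚ)/2) Λ n = (m:ℚ)/2 * n := by
    unfold wt; rw [hcn, Polynomial.natDegree_one]; simp
  have Aeq : wt ((m:ℚ)/2) Λ (n-2) = wt ((m:ℚ)/2) Λ n := by
    unfold wt
    rw [← hmdef, hcn, Polynomial.natDegree_one, hcN2]
    push_cast
    ring
  have hlow3 : ∀ k, Λ.coeff k ≠ 0 → k ≤ n - 3 → wt ((m:ℚ)/2) Λ k < wt ((m:ℚ)/2) Λ n := by
    intro k hk hk3
    rw [hwtn]
    unfold wt
    have hD : ((Λ.coeff k).natDegree : ℚ) ≤ (m:ℚ) := by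
      rcases eq_or_lt_of_le hk3 with heqk | hltk
      · rw [heqk, hm3]
      · exact_mod_cast (hmax' k (by omega) hk).le
    have hkc : (k:ℚ) ≤ (n:ℚ) - 3 := by
      calc (k:ℚ) ≤ ((n-3:ℕ):ℚ) := by exact_mod_cast hk3
      _ = (n:ℚ) - 3 := hcN3
    nlinarith [mul_nonneg (by linarith : (0:ℚ) ≤ (m:ℚ)) (by linarith : (0:ℚ) ≤ (n:ℚ) - 3 - k)]
  have Atop : ∀ k, Λ.coeff k ≠ 0 → wt ((m:ℚ)/2) Λ k ≤ wt ((m:ℚ)/2) Λ n := by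
    intro k hk
    have hkn := hle_n k hk
    rcases (by omega : k ≤ n - 3 ∨ k = n - 2 ∨ k = n - 1 ∨ k = n) with h | h | h | h
    · exact (hlow3 k hk h).le
    · rw [h, Aeq]
    · subst h
      rw [hwtn]
      unfold wt
      have hD : 2 * ((Λ.coeff (n-1)).natDegree : ℚ) ≤ (m:ℚ) := by exact_mod_cast hd1
      rw [hcN1]
      nlinarith [hD]
    · rw [h]
  have Alow : ∀ k, Λ.coeff k ≠ 0 → k < n - 2 → wt ((m:ℚ)/2) Λ k < wt ((m:ℚ)/2) Λ n := by
    intro k hk hklt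
    exact hlow3 k hk (by omega)
  -- slope 0 facts
  have Bt : ∀ k, Λ.coeff k ≠ 0 → (Λ.coeff k).natDegree ≤ m := by
    intro k hk
    have hkn := hle_n k hk
    rcases (by omega : k < n - 3 ∨ k = n - 3 ∨ k = n - 2 ∨ k = n - 1 ∨ k = n) with h | h | h | h | h
    · exact (hmax' k h hk).le
    · rw [h, hm3]
    · rw [h]
    · subst h; omega
    · rw [h, hcn, Polynomial.natDegree_one]; omega
  have Blow : ∀ k, Λ.coeff k ≠ 0 → k < n - 3 → (Λ.coeff k).natDegree < m :=
    fun k hk h => hmax' k h hk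
  have Bhigh : ∀ k, Λ.coeff k ≠ 0 → n - 2 < k → (Λ.coeff k).natDegree < m := by
    intro k hk hklt
    have hkn := hle_n k hk
    rcases (by omega : k = n - 1 ∨ k = n) with h | h
    · subst h; omega
    · rw [h, hcn, Polynomial.natDegree_one]; omega
  have F : NPAux.LF Fq n m Λ :=
    ⟨hn, hdeg, hm1, hodd, hne3, hne2, hc0, hcn, rfl, hm3, hL0,
      Aeq, Atop, Alow, Bt, Blow, Bhigh, hnoroot⟩
  -- irreducibility
  constructor
  · apply Polynomial.not_isUnit_of_natDegree_pos
    omega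
  · intro a b hab
    by_contra hcon
    push_neg at hcon
    obtain ⟨hua, hub⟩ := hcon
    have ha0 : a ≠ 0 := by rintro rfl; rw [zero_mul] at hab; exact hL0 hab
    have hb0 : b ≠ 0 := by rintro rfl; rw [mul_zero] at hab; exact hL0 hab
    have hl : a.leadingCoeff * b.leadingCoeff = 1 := by
      rw [← Polynomial.leadingCoeff_mul, ← hab, hmon.leadingCoeff]
    have hula : IsUnit a.leadingCoeff := IsUnit.of_mul_eq_one _ hl
    have hndla : a.leadingCoeff.natDegree = 0 := Polynomial.natDegree_eq_zero_of_isUnit hula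
    have hlaC : a.leadingCoeff = Polynomial.C (a.leadingCoeff.coeff 0) :=
      Polynomial.eq_C_of_natDegree_eq_zero hndla
    set c : Fq := a.leadingCoeff.coeff 0 with hcdef
    have hc_ne : c ≠ 0 := by
      intro hz
      rw [hz, Polynomial.C_0] at hlaC
      exact Polynomial.leadingCoeff_ne_zero.mpr ha0 hlaC
    set g : Polynomial (Polynomial Fq) := Polynomial.C (Polynomial.C c⁻¹) * a with hgdef
    set h : Polynomial (Polynomial Fq) := Polynomial.C (Polynomial.C c) * b with hhdef
    have hCne : (Polynomial.C (Polynomial.C c⁻¹) : Polynomial (Polynomial Fq)) ≠ 0 := by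
      simp [Polynomial.C_eq_zero, inv_ne_zero hc_ne]
    have hCne' : (Polynomial.C (Polynomial.C c) : Polynomial (Polynomial Fq)) ≠ 0 := by
      simp [Polynomial.C_eq_zero, hc_ne]
    have hgmon : g.Monic := by
      have hlg : g.leadingCoeff = 1 := by
        rw [hgdef, Polynomial.leadingCoeff_mul, Polynomial.leadingCoeff_C, hlaC,
          ← Polynomial.C_mul, inv_mul_cancel₀ hc_ne, Polynomial.C_1]
      exact hlg
    have hhmon : h.Monic := by
      have hlh : h.leadingCoeff = 1 := by
        rw [hhdef, Polynomial.leadingCoeff_mul, Polynomial.leadingCoeff_C]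
        rw [hlaC] at hl
        exact hl
      exact hlh
    have hgh : Λ = g * h := by
      have e1 : g * h = (Polynomial.C (Polynomial.C c⁻¹) * Polynomial.C (Polynomial.C c)) * (a * b) := by
        rw [hgdef, hhdef]; ring
      rw [e1, ← Polynomial.C_mul, ← Polynomial.C_mul, inv_mul_cancel₀ hc_ne,
        Polynomial.C_1, Polynomial.C_1, one_mul, ← hab]
    have hndg : g.natDegree = a.natDegree := by
      rw [hgdef, Polynomial.natDegree_mul hCne ha0, Polynomial.natDegree_C, zero_add]
    have hndh : h.natDegree = b.natDegree := by
      rw [hhdef, Polynomial.natDegree_mul hCne' hb0, Polynomial.natDegree_C, zero_add]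
    have h1a : 1 ≤ a.natDegree := by
      by_contra hcon'
      have h0 : a.natDegree = 0 := by omega
      apply hua
      have heqa : a = Polynomial.C (a.coeff 0) := Polynomial.eq_C_of_natDegree_eq_zero h0
      rw [heqa, Polynomial.isUnit_C]
      have : a.coeff 0 = a.leadingCoeff := by rw [Polynomial.leadingCoeff, h0]
      rw [this]; exact hula
    have hulb : IsUnit b.leadingCoeff :=
      IsUnit.of_mul_eq_one _ (by rw [mul_comm]; exact hl)
    have h1b : 1 ≤ b.natDegree := by
      by_contra hcon'
      have h0 : b.natDegree = 0 := by omega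
      apply hub
      have heqb : b = Polynomial.C (b.coeff 0) := Polynomial.eq_C_of_natDegree_eq_zero h0
      rw [heqb, Polynomial.isUnit_C]
      have : b.coeff 0 = b.leadingCoeff := by rw [Polynomial.leadingCoeff, h0]
      rw [this]; exact hulb
    have hsum : g.natDegree + h.natDegree = n := by
      rw [hndg, hndh, ← Polynomial.natDegree_mul ha0 hb0, ← hab, hdeg]
    exact NPAux.noFactor F hgh hgmon hhmon (by omega) (by omega) hsum
end

section
/- The polynomial Λ(Y) = Y³ + (X+1)Y² + (X⁴+X³)Y + X⁴+X³+X²+X+1 over F₂[X] is irreducible, and its roots ω₁, ω₂, ω₃ satisfy: ω₁, ω₂ ∈ F₂((X^{-1})) with |ω₁| = |ω₂| = 2² > 1, and |ω₃| = 1; hence (ω₁, ω₂) is a 2-Salem element lying in F₂((X^{-1})). -/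
open scoped Classical
set_option linter.unusedVariables false

section Aux

open Polynomial PowerSeries

variable {k : Type} [Field k]

instance psAdicComplete : IsAdicComplete (Ideal.span {(PowerSeries.X : PowerSeries k)}) (PowerSeries k) where
  haus' x hx := by
    simp only [← Ideal.one_eq_top, smul_eq_mul, mul_one, SModEq.sub_mem, sub_zero,
      Ideal.span_singleton_pow, Ideal.mem_span_singleton, PowerSeries.X_pow_dvd_iff] at hx
    ext n
    simpa using hx (n + 1) n (lt_add_one n)
  prec' f hf := by
    simp only [← Ideal.one_eq_top, smul_eq_mul, mul_one, SModEq.sub_mem,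
      Ideal.span_singleton_pow, Ideal.mem_span_singleton, PowerSeries.X_pow_dvd_iff] at hf ⊢
    refine ⟨PowerSeries.mk fun n => PowerSeries.coeff n (f (n + 1)), fun n i hi => ?_⟩
    have h := hf (Nat.succ_le_of_lt hi) i (lt_add_one i)
    simp only [map_sub] at h ⊢
    rw [PowerSeries.coeff_mk]
    linear_combination -h

lemma hensel_ps (f : Polynomial (PowerSeries k)) (hf : f.Monic) (a₀ : PowerSeries k)
    (h1 : PowerSeries.constantCoeff (R := k) (f.eval a₀) = 0)
    (h2 : PowerSeries.constantCoeff (R := k) ((Polynomial.derivative f).eval a₀) ≠ 0) :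
    ∃ a, f.IsRoot a ∧ PowerSeries.constantCoeff (R := k) (a - a₀) = 0 := by
  have hmem : f.eval a₀ ∈ Ideal.span {(PowerSeries.X : PowerSeries k)} := by
    rw [Ideal.mem_span_singleton, PowerSeries.X_dvd_iff]; exact h1
  have hunit : IsUnit (Ideal.Quotient.mk (Ideal.span {(PowerSeries.X : PowerSeries k)})
      ((Polynomial.derivative f).eval a₀)) := by
    apply IsUnit.map
    rw [PowerSeries.isUnit_iff_constantCoeff]
    exact Ne.isUnit h2
  obtain ⟨a, ha, hmem'⟩ := HenselianRing.is_henselian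
    (I := Ideal.span {(PowerSeries.X : PowerSeries k)}) f hf a₀ hmem hunit
  refine ⟨a, ha, ?_⟩
  rwa [← PowerSeries.X_dvd_iff, ← Ideal.mem_span_singleton]

end Aux

namespace Stmt17Aux

open Polynomial PowerSeries

local notation "O" => PowerSeries (ZMod 2)
local notation "t" => (PowerSeries.X : O)
local notation "cc" => PowerSeries.constantCoeff (R := ZMod 2)

lemma htwo : (2 : O) = 0 := by
  rw [← map_ofNat (PowerSeries.C (R := ZMod 2)) 2, show (2 : ZMod 2) = 0 by decide, map_zero]

lemma key : ∃ z₁ z₂ z₃ e : O,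
    cc z₁ = 1 ∧ cc z₂ = 1 ∧ cc e = 1 ∧
    z₃ = t ^ 2 * e ∧
    z₁ + z₂ + z₃ = -(t + t ^ 2) ∧
    z₁ * z₂ + z₁ * z₃ + z₂ * z₃ = 1 + t ∧
    z₁ * z₂ * z₃ = -(t ^ 2 + t ^ 3 + t ^ 4 + t ^ 5 + t ^ 6) := by
  -- Step 1: the small root z₃
  obtain ⟨z₃, hz₃root, hz₃c⟩ := hensel_ps
    (Polynomial.X ^ 3 + Polynomial.C (t + t ^ 2) * Polynomial.X ^ 2
      + Polynomial.C (1 + t) * Polynomial.X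
      + Polynomial.C (t ^ 2 + t ^ 3 + t ^ 4 + t ^ 5 + t ^ 6))
    (by monicity!) 0
    (by simp)
    (by simp [Polynomial.derivative_pow, Polynomial.derivative_C])
  rw [sub_zero] at hz₃c
  have hP3 : z₃ ^ 3 + (t + t ^ 2) * z₃ ^ 2 + (1 + t) * z₃
      + (t ^ 2 + t ^ 3 + t ^ 4 + t ^ 5 + t ^ 6) = 0 := by
    have := hz₃root
    simpa [Polynomial.IsRoot] using this
  -- Step 2: z₃ = t² e with e a unit
  have hdc : cc (1 + t + (t + t ^ 2) * z₃ + z₃ ^ 2) = 1 := by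
    simp [hz₃c]
  have hd : IsUnit (1 + t + (t + t ^ 2) * z₃ + z₃ ^ 2) := by
    rw [PowerSeries.isUnit_iff_constantCoeff, hdc]; exact isUnit_one
  set u := hd.unit with hu
  have hud : (u : O) = 1 + t + (t + t ^ 2) * z₃ + z₃ ^ 2 := hd.unit_spec
  set e : O := -((1 + t + t ^ 2 + t ^ 3 + t ^ 4) * (↑u⁻¹ : O)) with he_def
  have huinv : (u : O) * (↑u⁻¹ : O) = 1 := u.mul_inv
  have hccuinv : cc (↑u⁻¹ : O) = 1 := by
    have := congrArg cc huinv
    rw [map_mul, hud, hdc, map_one, one_mul] at this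
    exact this
  have hec : cc e = 1 := by
    rw [he_def]
    simp [hz₃c, hccuinv]
  have he : z₃ = t ^ 2 * e := by
    have h1 : z₃ * (u : O) = -(t ^ 2 * (1 + t + t ^ 2 + t ^ 3 + t ^ 4)) := by
      rw [hud]; linear_combination hP3
    calc z₃ = z₃ * ((u : O) * (↑u⁻¹ : O)) := by rw [huinv, mul_one]
    _ = (z₃ * (u : O)) * (↑u⁻¹ : O) := by ring
    _ = -(t ^ 2 * (1 + t + t ^ 2 + t ^ 3 + t ^ 4)) * (↑u⁻¹ : O) := by rw [h1]
    _ = t ^ 2 * e := by rw [he_def]; ring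
  -- Step 3: the quadratic S and its two roots
  obtain ⟨V₁, hV₁root, hV₁c⟩ := hensel_ps
    (Polynomial.X ^ 2 + Polynomial.C (1 + t + t * e) * Polynomial.X
      + Polynomial.C (1 + e + t * e + t ^ 2 * e + t ^ 2 * e ^ 2))
    (by monicity!) 1
    (by simp [hec]; decide)
    (by simp [hec, Polynomial.derivative_pow, Polynomial.derivative_C, map_ofNat]; decide)
  obtain ⟨V₂, hV₂root, hV₂c⟩ := hensel_ps
    (Polynomial.X ^ 2 + Polynomial.C (1 + t + t * e) * Polynomial.X
      + Polynomial.C (1 + e + t * e + t ^ 2 * e + t ^ 2 * e ^ 2))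
    (by monicity!) 0
    (by simp [hec]; decide)
    (by simp [hec, Polynomial.derivative_pow, Polynomial.derivative_C])
  rw [sub_zero] at hV₂c
  have hV₁c' : cc V₁ = 1 := by
    have : cc V₁ - 1 = 0 := by simpa [map_sub] using hV₁c
    linear_combination this
  have hS₁ : V₁ ^ 2 + (1 + t + t * e) * V₁ + (1 + e + t * e + t ^ 2 * e + t ^ 2 * e ^ 2) = 0 := by
    simpa [Polynomial.IsRoot] using hV₁root
  have hS₂ : V₂ ^ 2 + (1 + t + t * e) * V₂ + (1 + e + t * e + t ^ 2 * e + t ^ 2 * e ^ 2) = 0 := by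
    simpa [Polynomial.IsRoot] using hV₂root
  set z₁ : O := 1 + t * V₁ with hz₁def
  set z₂ : O := 1 + t * V₂ with hz₂def
  have hz₁c : cc z₁ = 1 := by simp [hz₁def]
  have hz₂c : cc z₂ = 1 := by simp [hz₂def]
  -- quadratic relations for z₁, z₂
  have q₁ : z₁ ^ 2 + (t + t ^ 2 + z₃) * z₁
      + (1 + t + z₃ * (t + t ^ 2) + z₃ ^ 2) = 0 := by
    rw [hz₁def]
    linear_combination (t : O) ^ 2 * hS₁ + (1 + t + t * V₁) * htwo
      + (1 + t + t ^ 2 + z₃ + t ^ 2 * e + t * V₁) * he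
  have q₂ : z₂ ^ 2 + (t + t ^ 2 + z₃) * z₂
      + (1 + t + z₃ * (t + t ^ 2) + z₃ ^ 2) = 0 := by
    rw [hz₂def]
    linear_combination (t : O) ^ 2 * hS₂ + (1 + t + t * V₂) * htwo
      + (1 + t + t ^ 2 + z₃ + t ^ 2 * e + t * V₂) * he
  -- b = -(z₁+z₂), c = z₁ z₂
  have hsubne : z₁ - z₂ ≠ 0 := by
    intro h
    have : cc (z₁ - z₂) = 0 := by rw [h]; simp
    rw [hz₁def, hz₂def] at this
    have h2 : t * (V₁ - V₂) = 0 := by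
      have : (1 + t * V₁) - (1 + t * V₂) = t * (V₁ - V₂) := by ring
      rw [hz₁def, hz₂def] at h; rw [← this, h]
    rcases mul_eq_zero.mp h2 with h3 | h3
    · exact PowerSeries.X_ne_zero h3
    · have := congrArg cc h3
      rw [map_sub, hV₁c', hV₂c, map_zero] at this
      simp at this
  have hkey : (z₁ - z₂) * (z₁ + z₂ + (t + t ^ 2 + z₃)) = 0 := by
    linear_combination q₁ - q₂
  have hb : z₁ + z₂ + (t + t ^ 2 + z₃) = 0 :=
    (mul_eq_zero.mp hkey).resolve_left hsubne
  have hc : 1 + t + z₃ * (t + t ^ 2) + z₃ ^ 2 = z₁ * z₂ := by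
    linear_combination -q₁ - z₁ * hb + (2 + 2*(t:O) + t*z₃ + t*z₃*V₁ + 2*t*V₁ + t^2 + t^2*z₃ + t^2*V₁ + t^2*V₁^2 + t^3*V₁ + z₃ + z₃^2) * htwo
  refine ⟨z₁, z₂, z₃, e, hz₁c, hz₂c, hec, he, ?_, ?_, ?_⟩
  · linear_combination hb
  · linear_combination hc - z₃ * hb + (-(t:O) + t*V₁ + t*V₁*z₃ + t*V₂ + t*V₂*z₃ + t^2*V₁*V₂ + 2*z₃) * htwo
  · linear_combination z₃ * hc + hP3 + ((t:O)*V₁*z₃ + t*V₂*z₃ - t*z₃ - t*z₃^2 + t^2*V₁*V₂*z₃ - t^2*z₃^2 - z₃^3) * htwo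

lemma coe_ne_zero {z : O} (h : cc z ≠ 0) :
    (HahnSeries.ofPowerSeries ℤ (ZMod 2) z) ≠ 0 := by
  intro h0
  apply h
  have : z = 0 := HahnSeries.ofPowerSeries_injective (by rw [h0, map_zero])
  rw [this, map_zero]

lemma coe_coeff_neg {z : O} {n : ℤ} (hn : n < 0) :
    (HahnSeries.ofPowerSeries ℤ (ZMod 2) z).coeff n = 0 := by
  rw [HahnSeries.ofPowerSeries_apply]
  apply HahnSeries.embDomain_notin_range
  rintro ⟨m, hm⟩
  change ((m : ℕ) : ℤ) = n at hm
  omega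

lemma coe_order_zero {z : O} (h : cc z ≠ 0) :
    (HahnSeries.ofPowerSeries ℤ (ZMod 2) z).order = 0 := by
  have hne := coe_ne_zero h
  apply le_antisymm
  · apply HahnSeries.order_le_of_coeff_ne_zero (g := (0 : ℤ))
    have : (HahnSeries.ofPowerSeries ℤ (ZMod 2) z).coeff ((0 : ℕ) : ℤ)
        = PowerSeries.coeff 0 z := HahnSeries.ofPowerSeries_apply_coeff z 0
    rw [show ((0 : ℕ) : ℤ) = 0 by norm_num] at this
    rw [this, PowerSeries.coeff_zero_eq_constantCoeff]
    exact h
  · by_contra hlt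
    push_neg at hlt
    exact hne (HahnSeries.coeff_order_eq_zero.mp (coe_coeff_neg hlt))

end Stmt17Aux

theorem stmt_17 (C : Type) [Field C] [IsAlgClosed C]
    (φL : LaurentSeries (ZMod 2) →+* C) (abv : AbsoluteValue C ℝ)
    (hna : ∀ x y : C, abv (x + y) ≤ max (abv x) (abv y))
    (hcomp : ∀ f : LaurentSeries (ZMod 2), f ≠ 0 → abv (φL f) = (2 : ℝ) ^ (-f.order))
    (Λ : Polynomial (Polynomial (ZMod 2)))
    (hΛ : Λ = Polynomial.X ^ 3
      + Polynomial.C (Polynomial.X + 1) * Polynomial.X ^ 2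
      + Polynomial.C (Polynomial.X ^ 4 + Polynomial.X ^ 3) * Polynomial.X
      + Polynomial.C (Polynomial.X ^ 4 + Polynomial.X ^ 3 + Polynomial.X ^ 2
          + Polynomial.X + 1)) :
    Irreducible Λ ∧
    ∃ ω₁ ω₂ ω₃ : C,
      (Λ.map (φL.comp (polyEmb (ZMod 2)))).roots = {ω₁, ω₂, ω₃} ∧
      ω₁ ∈ Set.range φL ∧ ω₂ ∈ Set.range φL ∧
      abv ω₁ = 2 ^ 2 ∧ abv ω₂ = 2 ^ 2 ∧ 1 < abv ω₁ ∧ 1 < abv ω₂ ∧ abv ω₃ = 1 := by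
  have hmonic : Λ.Monic := by rw [hΛ]; monicity!
  constructor
  · -- Irreducibility via reduction mod X
    have hmap : Λ.map (Polynomial.evalRingHom (0 : ZMod 2)) =
        Polynomial.X ^ 3 + Polynomial.X ^ 2 + 1 := by
      rw [hΛ]
      simp [Polynomial.map_add, Polynomial.map_mul, Polynomial.map_pow]
    have hcube : Irreducible
        (Polynomial.X ^ 3 + Polynomial.X ^ 2 + 1 : Polynomial (ZMod 2)) := by
      have h3 : (Polynomial.X ^ 3 + Polynomial.X ^ 2 + 1 : Polynomial (ZMod 2)).natDegree = 3 := by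
        compute_degree!
      have hne : (Polynomial.X ^ 3 + Polynomial.X ^ 2 + 1 : Polynomial (ZMod 2)) ≠ 0 := by
        intro h0
        rw [h0] at h3
        simp at h3
      rw [Polynomial.irreducible_iff_roots_eq_zero_of_degree_le_three (by omega) (by omega)]
      rw [Multiset.eq_zero_iff_forall_notMem]
      intro a ha
      rw [Polynomial.mem_roots hne] at ha
      have : a ^ 3 + a ^ 2 + 1 = 0 := by simpa [Polynomial.IsRoot] using ha
      revert this
      fin_cases a <;> decide
    exact Polynomial.Monic.irreducible_of_irreducible_map _ Λ hmonic (hmap ▸ hcube)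
  · obtain ⟨z₁, z₂, z₃, e, hz₁c, hz₂c, hec, he, E1, E2, E3⟩ := Stmt17Aux.key
    set χ : PowerSeries (ZMod 2) →+* LaurentSeries (ZMod 2) :=
      HahnSeries.ofPowerSeries ℤ (ZMod 2) with hχ
    set x : LaurentSeries (ZMod 2) := HahnSeries.single (-1 : ℤ) 1 with hxdef
    have hxu : x * χ PowerSeries.X = 1 := by
      rw [hχ, hxdef, HahnSeries.ofPowerSeries_X, HahnSeries.single_mul_single]
      norm_num
    set ψ := φL.comp (polyEmb (ZMod 2)) with hψ
    set a : C := φL x with hadef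
    set τ : C := φL (χ PowerSeries.X) with hτdef
    have hτ : a * τ = 1 := by rw [hadef, hτdef, ← map_mul, hxu, map_one]
    set ζ₁ : C := φL (χ z₁) with hζ₁
    set ζ₂ : C := φL (χ z₂) with hζ₂
    set ζ₃ : C := φL (χ z₃) with hζ₃
    have F1 : ζ₁ + ζ₂ + ζ₃ = -(τ + τ ^ 2) := by
      have := congrArg (fun z => φL (χ z)) E1
      simpa [map_add, map_mul, map_pow, map_neg] using this
    have F2 : ζ₁ * ζ₂ + ζ₁ * ζ₃ + ζ₂ * ζ₃ = 1 + τ := by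
      have := congrArg (fun z => φL (χ z)) E2
      simpa [map_add, map_mul, map_pow, map_one] using this
    have F3 : ζ₁ * ζ₂ * ζ₃ = -(τ ^ 2 + τ ^ 3 + τ ^ 4 + τ ^ 5 + τ ^ 6) := by
      have := congrArg (fun z => φL (χ z)) E3
      simpa [map_add, map_mul, map_pow, map_neg] using this
    set ω₁ : C := φL (x ^ 2 * χ z₁) with hω₁
    set ω₂ : C := φL (x ^ 2 * χ z₂) with hω₂
    set ω₃ : C := φL (x ^ 2 * χ z₃) with hω₃
    have hω₁' : ω₁ = a ^ 2 * ζ₁ := by rw [hω₁, map_mul, map_pow, hadef, hζ₁]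
    have hω₂' : ω₂ = a ^ 2 * ζ₂ := by rw [hω₂, map_mul, map_pow, hadef, hζ₂]
    have hω₃' : ω₃ = a ^ 2 * ζ₃ := by rw [hω₃, map_mul, map_pow, hadef, hζ₃]
    -- power reductions
    have p1 : a ^ 2 * τ = a := by linear_combination a * hτ
    have p2 : a ^ 2 * τ ^ 2 = 1 := by linear_combination (a * τ + 1) * hτ
    have p3 : a ^ 4 * τ = a ^ 3 := by linear_combination a ^ 3 * hτ
    have q2 : a ^ 6 * τ ^ 2 = a ^ 4 := by linear_combination (a ^ 5 * τ + a ^ 4) * hτ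
    have q3 : a ^ 6 * τ ^ 3 = a ^ 3 := by
      linear_combination (a ^ 5 * τ ^ 2 + a ^ 4 * τ + a ^ 3) * hτ
    have q4 : a ^ 6 * τ ^ 4 = a ^ 2 := by
      linear_combination (a ^ 5 * τ ^ 3 + a ^ 4 * τ ^ 2 + a ^ 3 * τ + a ^ 2) * hτ
    have q5 : a ^ 6 * τ ^ 5 = a := by
      linear_combination (a ^ 5 * τ ^ 4 + a ^ 4 * τ ^ 3 + a ^ 3 * τ ^ 2 + a ^ 2 * τ + a) * hτ
    have q6 : a ^ 6 * τ ^ 6 = 1 := by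
      linear_combination (a ^ 5 * τ ^ 5 + a ^ 4 * τ ^ 4 + a ^ 3 * τ ^ 3 + a ^ 2 * τ ^ 2
        + a * τ + 1) * hτ
    have G1 : ω₁ + ω₂ + ω₃ = -(a + 1) := by
      rw [hω₁', hω₂', hω₃']
      linear_combination a ^ 2 * F1 - p1 - p2
    have G2 : ω₁ * ω₂ + ω₁ * ω₃ + ω₂ * ω₃ = a ^ 4 + a ^ 3 := by
      rw [hω₁', hω₂', hω₃']
      linear_combination a ^ 4 * F2 + p3
    have G3 : ω₁ * ω₂ * ω₃ = -(a ^ 4 + a ^ 3 + a ^ 2 + a + 1) := by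
      rw [hω₁', hω₂', hω₃']
      linear_combination a ^ 6 * F3 - q2 - q3 - q4 - q5 - q6
    -- the mapped polynomial and its factorization
    have hM : Λ.map ψ = Polynomial.X ^ 3 + Polynomial.C (a + 1) * Polynomial.X ^ 2
        + Polynomial.C (a ^ 4 + a ^ 3) * Polynomial.X
        + Polynomial.C (a ^ 4 + a ^ 3 + a ^ 2 + a + 1) := by
      rw [hΛ]
      simp only [Polynomial.map_add, Polynomial.map_mul, Polynomial.map_pow, Polynomial.map_X,
        Polynomial.map_C, Polynomial.map_one, hψ, RingHom.coe_comp, Function.comp_apply]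
      simp only [polyEmb, Polynomial.coe_eval₂RingHom, Polynomial.eval₂_add, Polynomial.eval₂_mul,
        Polynomial.eval₂_pow, Polynomial.eval₂_X, Polynomial.eval₂_one]
      simp only [map_add, map_pow, map_one, ← hxdef, ← hadef]
    have hfact : Λ.map ψ = (Polynomial.X - Polynomial.C ω₁) * (Polynomial.X - Polynomial.C ω₂)
        * (Polynomial.X - Polynomial.C ω₃) := by
      rw [hM, show (a ^ 4 + a ^ 3 + a ^ 2 + a + 1 : C) = -(ω₁ * ω₂ * ω₃) by
          linear_combination G3,
        show (a ^ 4 + a ^ 3 : C) = ω₁ * ω₂ + ω₁ * ω₃ + ω₂ * ω₃ from G2.symm,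
        show (a + 1 : C) = -(ω₁ + ω₂ + ω₃) by linear_combination G1]
      simp only [map_neg, map_add, map_mul]
      ring
    -- absolute values
    have hxne : x ≠ 0 := by
      rw [hxdef]; exact HahnSeries.single_ne_zero one_ne_zero
    have hx2 : x ^ 2 = HahnSeries.single (-2 : ℤ) (1 : ZMod 2) := by
      rw [hxdef, pow_two, HahnSeries.single_mul_single]
      norm_num
    have hz₁ne : χ z₁ ≠ 0 := Stmt17Aux.coe_ne_zero (by rw [hz₁c]; exact one_ne_zero)
    have hz₂ne : χ z₂ ≠ 0 := Stmt17Aux.coe_ne_zero (by rw [hz₂c]; exact one_ne_zero)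
    have hene : χ e ≠ 0 := Stmt17Aux.coe_ne_zero (by rw [hec]; exact one_ne_zero)
    have hs2ne : (HahnSeries.single (-2 : ℤ) (1 : ZMod 2)) ≠ 0 :=
      HahnSeries.single_ne_zero one_ne_zero
    have habv₁ : abv ω₁ = 2 ^ 2 := by
      have hne : x ^ 2 * χ z₁ ≠ 0 := mul_ne_zero (pow_ne_zero 2 hxne) hz₁ne
      have hord : (x ^ 2 * χ z₁).order = -2 := by
        rw [hx2, HahnSeries.order_mul hs2ne hz₁ne, HahnSeries.order_single one_ne_zero,
          Stmt17Aux.coe_order_zero (by rw [hz₁c]; exact one_ne_zero)]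
        norm_num
      have h := hcomp _ hne
      rw [hord] at h
      rw [hω₁, h]
      norm_num
    have habv₂ : abv ω₂ = 2 ^ 2 := by
      have hne : x ^ 2 * χ z₂ ≠ 0 := mul_ne_zero (pow_ne_zero 2 hxne) hz₂ne
      have hord : (x ^ 2 * χ z₂).order = -2 := by
        rw [hx2, HahnSeries.order_mul hs2ne hz₂ne, HahnSeries.order_single one_ne_zero,
          Stmt17Aux.coe_order_zero (by rw [hz₂c]; exact one_ne_zero)]
        norm_num
      have h := hcomp _ hne
      rw [hord] at h
      rw [hω₂, h]
      norm_num
    have hx2e : x ^ 2 * χ z₃ = χ e := by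
      rw [he, map_mul, map_pow, hχ, HahnSeries.ofPowerSeries_X, ← hχ, hx2]
      rw [show ((HahnSeries.single (1 : ℤ) (1 : ZMod 2)) ^ 2 : LaurentSeries (ZMod 2))
          = HahnSeries.single (2 : ℤ) 1 by rw [pow_two, HahnSeries.single_mul_single]; norm_num]
      rw [← mul_assoc, HahnSeries.single_mul_single]
      norm_num
    have habv₃ : abv ω₃ = 1 := by
      have h : ω₃ = φL (χ e) := by rw [hω₃, hx2e]
      rw [h, hcomp _ hene, Stmt17Aux.coe_order_zero (by rw [hec]; exact one_ne_zero)]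
      norm_num
    have hroots : (Λ.map ψ).roots = {ω₁, ω₂, ω₃} := by
      rw [hfact,
        Polynomial.roots_mul (mul_ne_zero
          (mul_ne_zero (Polynomial.X_sub_C_ne_zero ω₁) (Polynomial.X_sub_C_ne_zero ω₂))
          (Polynomial.X_sub_C_ne_zero ω₃)),
        Polynomial.roots_mul (mul_ne_zero (Polynomial.X_sub_C_ne_zero ω₁)
          (Polynomial.X_sub_C_ne_zero ω₂)),
        Polynomial.roots_X_sub_C, Polynomial.roots_X_sub_C, Polynomial.roots_X_sub_C]
      rfl
    exact ⟨ω₁, ω₂, ω₃, hroots, ⟨_, hω₁.symm⟩, ⟨_, hω₂.symm⟩, habv₁, habv₂,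
      by rw [habv₁]; norm_num, by rw [habv₂]; norm_num, habv₃⟩
end

section
/- The polynomial Λ(Y) = Y³ + (X+1)Y² + X²Y − X² + 2 over F₃[X] is irreducible, and has two roots ω₁, ω₂ ∈ F₃((X^{-1})) of absolute value > 1 (of degrees 1 each) and one root ω₃ of absolute value exactly 1; hence (ω₁, ω₂) is a 2-Salem element lying in F₃((X^{-1})), even though deg λ₁ = 2·deg λ₂. -/
open scoped Classical
set_option linter.unusedVariables false

open PowerSeries
abbrev R3 := PowerSeries (ZMod 3)

lemma smod_span_X_iff (a b : R3) (n : ℕ) :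
    a ≡ b [SMOD ((Ideal.span {(X : R3)}) ^ n • ⊤ : Submodule R3 R3)] ↔
      ∀ m < n, (coeff m) a = (coeff m) b := by
  rw [SModEq.sub_mem]
  rw [show ((Ideal.span {(X : R3)}) ^ n • ⊤ : Submodule R3 R3)
      = ((Ideal.span {(X : R3)}) ^ n : Ideal R3) by
    rw [← Ideal.one_eq_top, smul_eq_mul, mul_one]]
  rw [Ideal.span_singleton_pow, Ideal.mem_span_singleton, PowerSeries.X_pow_dvd_iff]
  refine forall_congr' fun m => forall_congr' fun hm => ?_
  rw [map_sub, sub_eq_zero]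

instance : IsAdicComplete (Ideal.span {(X : R3)}) R3 where
  haus' x hx := by
    ext n
    have := (smod_span_X_iff x 0 (n+1)).mp (hx (n+1)) n (by omega)
    simpa using this
  prec' f hf := by
    refine ⟨PowerSeries.mk fun n => (coeff n) (f (n+1)), fun n => ?_⟩
    rw [smod_span_X_iff]
    intro m hm
    rw [PowerSeries.coeff_mk]
    exact (smod_span_X_iff (f (m+1)) (f n) m.succ).mp (hf (by omega)) m (by omega) |>.symm ▸ rfl

open Polynomial in

lemma hensel_root (b c : R3) (a₀ : R3)
    (h0 : (PowerSeries.constantCoeff) (a₀^2 + b*a₀ + c) = 0)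
    (h1 : ((PowerSeries.constantCoeff) (2*a₀ + b))^2 = 1) :
    ∃ t : R3, t^2 + b*t + c = 0 ∧
      (PowerSeries.constantCoeff) t = (PowerSeries.constantCoeff) a₀ := by
  have H : HenselianRing R3 (Ideal.span {(X : R3)}) := inferInstance
  set P : Polynomial R3 := Polynomial.X^2 + Polynomial.C b * Polynomial.X + Polynomial.C c with hP
  have hmon : P.Monic := by
    have := Polynomial.monic_X_pow_add (n := 2)
      (p := Polynomial.C b * Polynomial.X + Polynomial.C c) ?_
    · simpa [hP, add_assoc] using this
    · exact lt_of_le_of_lt (Polynomial.degree_linear_le) (by norm_num)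
  have hder : Polynomial.derivative P = Polynomial.C 2 * Polynomial.X + Polynomial.C b := by
    simp [hP]
    rw [one_add_one_eq_two, map_ofNat]
  have hevald : (Polynomial.derivative P).eval a₀ = 2*a₀ + b := by
    rw [hder]; simp
  obtain ⟨t, ht, ht0⟩ := H.is_henselian P hmon a₀
    (by
      rw [Ideal.mem_span_singleton, PowerSeries.X_dvd_iff]
      simpa [hP, sq] using h0)
    (by
      apply IsUnit.of_mul_eq_one (Ideal.Quotient.mk _ ((Polynomial.derivative P).eval a₀))
      rw [← map_mul, ← map_one (Ideal.Quotient.mk (Ideal.span {(X : R3)}))]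
      rw [Ideal.Quotient.eq, Ideal.mem_span_singleton, PowerSeries.X_dvd_iff]
      rw [hevald, map_sub, map_one, ← sq, map_pow, h1, sub_self])
  refine ⟨t, ?_, ?_⟩
  · simpa [hP, Polynomial.IsRoot, sq] using ht
  · rw [Ideal.mem_span_singleton, PowerSeries.X_dvd_iff, map_sub, sub_eq_zero] at ht0
    exact ht0

lemma hensel_root_cubic :
    ∃ s : R3, s^3 + (1+X)*s^2 + s + (2*X^3 - X) = 0 ∧
      (PowerSeries.constantCoeff) s = 0 := by
  have H : HenselianRing R3 (Ideal.span {(X : R3)}) := inferInstance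
  set P : Polynomial R3 := Polynomial.X^3 + (Polynomial.C (1+X) * Polynomial.X^2
      + Polynomial.C 1 * Polynomial.X + Polynomial.C (2*X^3 - X)) with hP
  have hmon : P.Monic := by
    refine Polynomial.monic_X_pow_add (n := 3) ?_
    exact lt_of_le_of_lt (Polynomial.degree_quadratic_le) (by norm_num)
  have hevald : (Polynomial.derivative P).eval 0 = 1 := by
    simp only [hP, Polynomial.derivative_add, Polynomial.derivative_C_mul, Polynomial.derivative_C,
      Polynomial.derivative_X_pow, Polynomial.derivative_X]
    simp
  obtain ⟨t, ht, ht0⟩ := H.is_henselian P hmon 0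
    (by
      rw [Ideal.mem_span_singleton, PowerSeries.X_dvd_iff]
      simp [hP])
    (by rw [hevald, map_one]; exact isUnit_one)
  refine ⟨t, ?_, ?_⟩
  · have := ht
    simp only [hP, Polynomial.IsRoot, Polynomial.eval_add, Polynomial.eval_pow,
      Polynomial.eval_mul, Polynomial.eval_X, Polynomial.eval_C, one_mul] at this
    linear_combination this
  · rw [sub_zero, Ideal.mem_span_singleton, PowerSeries.X_dvd_iff] at ht0
    exact ht0

lemma exists_q_t :
    ∃ q t₁ t₂ : R3,
      X*(1+X*q)^3 + (1+X)*(1+X*q)^2 + q + 2*X = 0 ∧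
      (PowerSeries.constantCoeff) q = 2 ∧
      t₁^2 + (2+X*q)*t₁ + (2 - q + X^2*q^2) = 0 ∧
      t₂^2 + (2+X*q)*t₂ + (2 - q + X^2*q^2) = 0 ∧
      (PowerSeries.constantCoeff) t₁ = 0 ∧
      (PowerSeries.constantCoeff) t₂ = 1 := by
  obtain ⟨s, hs, hs0⟩ := hensel_root_cubic
  obtain ⟨p, hp⟩ := PowerSeries.X_dvd_iff.mpr hs0
  rw [hp] at hs
  have h1 : X * (X^2*p^3 + (1+X)*X*p^2 + p + 2*X^2 - 1) = 0 := by linear_combination hs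
  have inner1 : X^2*p^3 + (1+X)*X*p^2 + p + 2*X^2 - 1 = 0 :=
    (mul_eq_zero.mp h1).resolve_left PowerSeries.X_ne_zero
  have ccp : (PowerSeries.constantCoeff) p = 1 := by
    have := congrArg (PowerSeries.constantCoeff) inner1
    simpa [map_add, map_mul, map_sub, map_pow, PowerSeries.constantCoeff_X, sub_eq_zero] using this
  have hpq : X ∣ (p - 1) := PowerSeries.X_dvd_iff.mpr (by rw [map_sub, ccp, map_one, sub_self])
  obtain ⟨q, hq⟩ := hpq
  have hp1 : p = 1 + X*q := by linear_combination hq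
  rw [hp1] at inner1
  have h2 : X * (X*(1+X*q)^3 + (1+X)*(1+X*q)^2 + q + 2*X) = 0 := by linear_combination inner1
  have hE : X*(1+X*q)^3 + (1+X)*(1+X*q)^2 + q + 2*X = 0 :=
    (mul_eq_zero.mp h2).resolve_left PowerSeries.X_ne_zero
  have ccq : (PowerSeries.constantCoeff) q = 2 := by
    have h := congrArg (PowerSeries.constantCoeff) hE
    simp only [map_add, map_mul, map_pow, map_one, map_ofNat, PowerSeries.constantCoeff_X,
      map_zero, zero_mul, mul_zero, zero_add, add_zero, one_pow, mul_one, one_mul] at h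
    have h3 : (3:ZMod 3) = 0 := by decide
    linear_combination h - h3
  have cc2 : (PowerSeries.constantCoeff) (2 : R3) = 2 := by
    exact map_ofNat _ 2
  obtain ⟨t₁, ht₁, cct₁⟩ := hensel_root (2+X*q) (2 - q + X^2*q^2) 0
    (by
      simp only [map_add, map_mul, map_sub, map_pow, PowerSeries.constantCoeff_X, cc2, ccq,
        map_zero, map_one]
      ring)
    (by
      simp only [map_add, map_mul, map_sub, map_pow, PowerSeries.constantCoeff_X, cc2, ccq,
        map_zero, map_one]
      decide)
  obtain ⟨t₂, ht₂, cct₂⟩ := hensel_root (2+X*q) (2 - q + X^2*q^2) 1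
    (by
      simp only [map_add, map_mul, map_sub, map_pow, PowerSeries.constantCoeff_X, cc2, ccq,
        map_zero, map_one]
      decide)
    (by
      simp only [map_add, map_mul, map_sub, map_pow, PowerSeries.constantCoeff_X, cc2, ccq,
        map_zero, map_one]
      decide)
  exact ⟨q, t₁, t₂, hE, ccq, ht₁, ht₂, by rw [cct₁, map_zero], by rw [cct₂, map_one]⟩

abbrev K3 := LaurentSeries (ZMod 3)
noncomputable abbrev ι3 : R3 →+* K3 := HahnSeries.ofPowerSeries ℤ (ZMod 3)
noncomputable abbrev xK : K3 := HahnSeries.single (-1) (1 : ZMod 3)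

lemma order_eq_of_coeff {f : K3} {n : ℤ} (h0 : f.coeff n ≠ 0)
    (hlt : ∀ m, m < n → f.coeff m = 0) : f.order = n ∧ f ≠ 0 := by
  have hne : f ≠ 0 := fun h => h0 (by rw [h]; simp)
  refine ⟨le_antisymm (HahnSeries.order_le_of_coeff_ne_zero h0) ?_, hne⟩
  by_contra hlt'
  push_neg at hlt'
  exact hne (HahnSeries.coeff_order_eq_zero.mp (hlt _ hlt'))

lemma coeff_ι3_neg (t : R3) (m : ℤ) (hm : m < 0) : (ι3 t).coeff m = 0 := by
  have := PowerSeries.coeff_coe t m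
  rw [if_pos hm] at this
  exact this

lemma coeff_ι3_zero (t : R3) :
    (ι3 t).coeff (0:ℤ) = (PowerSeries.constantCoeff) t := by
  have := HahnSeries.ofPowerSeries_apply_coeff (Γ := ℤ) t 0
  simpa using this

lemma key_K : ∃ ω₁ ω₂ ω₃ : K3,
    ω₁ + ω₂ + ω₃ = -(xK+1) ∧ ω₁*ω₂ + ω₁*ω₃ + ω₂*ω₃ = xK^2 ∧ ω₁*ω₂*ω₃ = xK^2 - 2 ∧
    ω₁.order = -1 ∧ ω₂.order = -1 ∧ ω₃.order = 0 ∧ ω₁ ≠ 0 ∧ ω₂ ≠ 0 ∧ ω₃ ≠ 0 := by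
  obtain ⟨q, t₁, t₂, hE, ccq, ht₁, ht₂, cct₁, cct₂⟩ := exists_q_t
  set u : K3 := ι3 X with hu
  set w : K3 := ι3 q with hw
  set T₁ : K3 := ι3 t₁ with hT1
  set T₂ : K3 := ι3 t₂ with hT2
  have hux : xK * u = 1 := by
    rw [hu, HahnSeries.ofPowerSeries_X, xK, HahnSeries.single_mul_single]
    norm_num
  have h3R : (3:R3) = 0 := by
    rw [← map_ofNat (PowerSeries.C) 3, show (3:ZMod 3) = 0 by decide, map_zero]
  have h3 : (3:K3) = 0 := by rw [← map_ofNat ι3 3, h3R, map_zero]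
  have e1 : T₁^2 + (2+u*w)*T₁ + (2 - w + u^2*w^2) = 0 := by
    have := congrArg ι3 ht₁
    simpa only [map_add, map_mul, map_pow, map_sub, map_ofNat, map_zero] using this
  have e2 : T₂^2 + (2+u*w)*T₂ + (2 - w + u^2*w^2) = 0 := by
    have := congrArg ι3 ht₂
    simpa only [map_add, map_mul, map_pow, map_sub, map_ofNat, map_zero] using this
  have eE : u*(1+u*w)^3 + (1+u)*(1+u*w)^2 + w + 2*u = 0 := by
    have := congrArg ι3 hE
    simpa only [map_add, map_mul, map_pow, map_sub, map_ofNat, map_one, map_zero] using this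
  have hTne : T₁ ≠ T₂ := by
    intro h
    have h0 : (T₁ : K3).coeff (0:ℤ) = (T₂ : K3).coeff (0:ℤ) := by rw [h]
    rw [hT1, hT2, coeff_ι3_zero, coeff_ι3_zero, cct₁, cct₂] at h0
    exact zero_ne_one h0
  have h12 : (T₁ - T₂) * (T₁ + T₂ + (2+u*w)) = 0 := by linear_combination e1 - e2
  have hsum : T₁ + T₂ = -(2+u*w) := by
    have := (mul_eq_zero.mp h12).resolve_left (sub_ne_zero.mpr hTne)
    linear_combination this
  have hprod : T₁ * T₂ = 2 - w + u^2*w^2 := by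
    linear_combination -e1 + T₁ * hsum
  refine ⟨xK + T₁, xK + T₂, 1 + u*w, ?_, ?_, ?_, ?_, ?_, ?_, ?_, ?_, ?_⟩
  · linear_combination hsum + xK * h3
  · linear_combination (xK + 1 + u*w) * hsum + hprod + w * hux + (-(u*w)) * h3
  · linear_combination xK*(1+u*w) * hsum + (1+u*w) * hprod + xK^2*u * eE
      + (-(4 + 5*w + 5*u*w + 2*u*w^2 + 4*u^2*w^2 + u^3*w^3 + xK + 4*xK*u + 2*xK*u*w
          + 5*xK*u^2*w + xK*u^2*w^2 + 4*xK*u^3*w^2 + xK*u^4*w^3)) * hux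
      + (-(2*w + u*w + u*w^2 + u^2*w^2 + xK)) * h3
  · exact (order_eq_of_coeff (n := -1) (by
      rw [HahnSeries.coeff_add, HahnSeries.coeff_single_same, hT1,
        coeff_ι3_neg t₁ (-1) (by norm_num)]
      norm_num) (fun m hm => by
      rw [HahnSeries.coeff_add, HahnSeries.coeff_single_of_ne (by omega), hT1,
        coeff_ι3_neg t₁ m (by omega), add_zero])).1
  · exact (order_eq_of_coeff (n := -1) (by
      rw [HahnSeries.coeff_add, HahnSeries.coeff_single_same, hT2,
        coeff_ι3_neg t₂ (-1) (by norm_num)]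
      norm_num) (fun m hm => by
      rw [HahnSeries.coeff_add, HahnSeries.coeff_single_of_ne (by omega), hT2,
        coeff_ι3_neg t₂ m (by omega), add_zero])).1
  · have hrw : (1 + u*w : K3) = ι3 (1 + X*q) := by
      rw [map_add, map_one, map_mul, hu, hw]
    rw [hrw]
    exact (order_eq_of_coeff (n := 0) (by
      rw [coeff_ι3_zero]
      simp [PowerSeries.constantCoeff_X]) (fun m hm => coeff_ι3_neg _ m hm)).1
  · exact (order_eq_of_coeff (n := -1) (by
      rw [HahnSeries.coeff_add, HahnSeries.coeff_single_same, hT1,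
        coeff_ι3_neg t₁ (-1) (by norm_num)]
      norm_num) (fun m hm => by
      rw [HahnSeries.coeff_add, HahnSeries.coeff_single_of_ne (by omega), hT1,
        coeff_ι3_neg t₁ m (by omega), add_zero])).2
  · exact (order_eq_of_coeff (n := -1) (by
      rw [HahnSeries.coeff_add, HahnSeries.coeff_single_same, hT2,
        coeff_ι3_neg t₂ (-1) (by norm_num)]
      norm_num) (fun m hm => by
      rw [HahnSeries.coeff_add, HahnSeries.coeff_single_of_ne (by omega), hT2,
        coeff_ι3_neg t₂ m (by omega), add_zero])).2
  · have hrw : (1 + u*w : K3) = ι3 (1 + X*q) := by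
      rw [map_add, map_one, map_mul, hu, hw]
    rw [hrw]
    exact (order_eq_of_coeff (n := 0) (by
      rw [coeff_ι3_zero]
      simp [PowerSeries.constantCoeff_X]) (fun m hm => coeff_ι3_neg _ m hm)).2

theorem stmt_18 (C : Type) [Field C] [IsAlgClosed C]
    (φL : LaurentSeries (ZMod 3) →+* C) (abv : AbsoluteValue C ℝ)
    (hna : ∀ x y : C, abv (x + y) ≤ max (abv x) (abv y))
    (hcomp : ∀ f : LaurentSeries (ZMod 3), f ≠ 0 → abv (φL f) = (3 : ℝ) ^ (-f.order))
    (Λ : Polynomial (Polynomial (ZMod 3)))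
    (hΛ : Λ = Polynomial.X ^ 3
      + Polynomial.C (Polynomial.X + 1) * Polynomial.X ^ 2
      + Polynomial.C (Polynomial.X ^ 2) * Polynomial.X
      + Polynomial.C (-Polynomial.X ^ 2 + 2)) :
    Irreducible Λ ∧
    (Λ.coeff 1).natDegree = 2 * (Λ.coeff 2).natDegree ∧
    ∃ ω₁ ω₂ ω₃ : C,
      (Λ.map (φL.comp (polyEmb (ZMod 3)))).roots = {ω₁, ω₂, ω₃} ∧
      ω₁ ∈ Set.range φL ∧ ω₂ ∈ Set.range φL ∧
      abv ω₁ = 3 ∧ abv ω₂ = 3 ∧ 1 < abv ω₁ ∧ 1 < abv ω₂ ∧ abv ω₃ = 1 := by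
  have hΛ' : Λ = Polynomial.X ^ 3 + (Polynomial.C (Polynomial.X + 1) * Polynomial.X ^ 2
      + Polynomial.C (Polynomial.X ^ 2) * Polynomial.X
      + Polynomial.C (-Polynomial.X ^ 2 + 2)) := by rw [hΛ]; ring
  have hmonΛ : Λ.Monic := by
    rw [hΛ']
    exact Polynomial.monic_X_pow_add
      (lt_of_le_of_lt Polynomial.degree_quadratic_le (by norm_num))
  constructor
  · -- irreducibility
    apply hmonΛ.irreducible_of_irreducible_map (Polynomial.evalRingHom (0 : ZMod 3))
    have hmap0 : Λ.map (Polynomial.evalRingHom (0 : ZMod 3)) =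
        Polynomial.X ^ 3 + (Polynomial.C 1 * Polynomial.X ^ 2 + Polynomial.C 0 * Polynomial.X
          + Polynomial.C 2) := by
      rw [hΛ']
      simp only [Polynomial.map_add, Polynomial.map_pow, Polynomial.map_mul, Polynomial.map_X,
        Polynomial.map_C, Polynomial.coe_evalRingHom, Polynomial.eval_add, Polynomial.eval_pow,
        Polynomial.eval_X, Polynomial.eval_one, Polynomial.eval_neg, Polynomial.eval_ofNat]
      norm_num
    rw [hmap0]
    have hmon2 : (Polynomial.X ^ 3 + (Polynomial.C 1 * Polynomial.X ^ 2
        + Polynomial.C 0 * Polynomial.X + Polynomial.C 2) : Polynomial (ZMod 3)).Monic :=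
      Polynomial.monic_X_pow_add
        (lt_of_le_of_lt Polynomial.degree_quadratic_le (by norm_num))
    have hdeg : (Polynomial.X ^ 3 + (Polynomial.C 1 * Polynomial.X ^ 2
        + Polynomial.C 0 * Polynomial.X + Polynomial.C 2) : Polynomial (ZMod 3)).natDegree = 3 := by
      have h1 : (Polynomial.C 1 * Polynomial.X ^ 2 + Polynomial.C 0 * Polynomial.X
          + Polynomial.C 2 : Polynomial (ZMod 3)).degree < (Polynomial.X ^ 3 :
          Polynomial (ZMod 3)).degree := by
        rw [Polynomial.degree_X_pow]
        exact lt_of_le_of_lt Polynomial.degree_quadratic_le (by norm_num)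
      have hdeg' : (Polynomial.X ^ 3 + (Polynomial.C 1 * Polynomial.X ^ 2
          + Polynomial.C 0 * Polynomial.X + Polynomial.C 2) : Polynomial (ZMod 3)).degree = 3 := by
        rw [Polynomial.degree_add_eq_left_of_degree_lt h1, Polynomial.degree_X_pow]
        rfl
      exact Polynomial.natDegree_eq_of_degree_eq_some hdeg'
    rw [hmon2.irreducible_iff_roots_eq_zero_of_degree_le_three (by omega) (by omega)]
    rw [Multiset.eq_zero_iff_forall_notMem]
    intro a ha
    rw [Polynomial.mem_roots hmon2.ne_zero] at ha
    have h := ha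
    simp only [Polynomial.IsRoot, Polynomial.eval_add, Polynomial.eval_pow, Polynomial.eval_mul,
      Polynomial.eval_X, Polynomial.eval_C, one_mul, zero_mul] at h
    have hall : ∀ b : ZMod 3, ¬ (b ^ 3 + (b ^ 2 + 0 + 2) = 0) := by decide
    exact hall a h
  constructor
  · have hc1 : Λ.coeff 1 = Polynomial.X ^ 2 := by
      rw [hΛ]
      simp only [Polynomial.coeff_add, Polynomial.coeff_C_mul, Polynomial.coeff_X_pow,
        Polynomial.coeff_X, Polynomial.coeff_C]
      norm_num
    have hc2 : Λ.coeff 2 = Polynomial.X + 1 := by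
      rw [hΛ]
      simp only [Polynomial.coeff_add, Polynomial.coeff_C_mul, Polynomial.coeff_X_pow,
        Polynomial.coeff_X, Polynomial.coeff_C]
      norm_num
    rw [hc1, hc2, Polynomial.natDegree_X_pow]
    have h1' : (Polynomial.X + 1 : Polynomial (ZMod 3)).natDegree = 1 := by
      simpa using Polynomial.natDegree_X_add_C (1 : ZMod 3)
    rw [h1']
  obtain ⟨ω₁K, ω₂K, ω₃K, hA, hB, hCp, ho1, ho2, ho3, hn1, hn2, hn3⟩ := key_K
  set ψ := φL.comp (polyEmb (ZMod 3)) with hψ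
  set xC := φL xK with hxC
  have hψX : ψ Polynomial.X = xC := by
    rw [hψ, RingHom.comp_apply]
    congr 1
    simp [polyEmb]
  have hψ1 : ψ (Polynomial.X + 1) = xC + 1 := by rw [map_add, map_one, hψX]
  have hψ2 : ψ (Polynomial.X ^ 2) = xC ^ 2 := by rw [map_pow, hψX]
  have hψ3 : ψ (-Polynomial.X ^ 2 + 2) = -xC ^ 2 + 2 := by
    rw [map_add, map_neg, map_pow, map_ofNat, hψX]
  have hA' : φL ω₁K + φL ω₂K + φL ω₃K = -(xC + 1) := by
    have := congrArg φL hA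
    simpa only [map_add, map_neg, map_one, hxC] using this
  have hB' : φL ω₁K * φL ω₂K + φL ω₁K * φL ω₃K + φL ω₂K * φL ω₃K = xC ^ 2 := by
    have := congrArg φL hB
    simpa only [map_add, map_mul, map_pow, hxC] using this
  have hC' : φL ω₁K * φL ω₂K * φL ω₃K = xC ^ 2 - 2 := by
    have := congrArg φL hCp
    simpa only [map_mul, map_sub, map_pow, map_ofNat, hxC] using this
  refine ⟨φL ω₁K, φL ω₂K, φL ω₃K, ?_, ⟨ω₁K, rfl⟩, ⟨ω₂K, rfl⟩, ?_, ?_, ?_, ?_, ?_⟩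
  · have cA : (Polynomial.C (φL ω₁K) + Polynomial.C (φL ω₂K) + Polynomial.C (φL ω₃K) :
        Polynomial C) = -(Polynomial.C xC + 1) := by
      rw [← Polynomial.C_add, ← Polynomial.C_add, hA']
      simp
    have cB : (Polynomial.C (φL ω₁K) * Polynomial.C (φL ω₂K)
        + Polynomial.C (φL ω₁K) * Polynomial.C (φL ω₃K)
        + Polynomial.C (φL ω₂K) * Polynomial.C (φL ω₃K) : Polynomial C)
        = Polynomial.C xC ^ 2 := by
      rw [← Polynomial.C_mul, ← Polynomial.C_mul, ← Polynomial.C_mul, ← Polynomial.C_add,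
        ← Polynomial.C_add, hB', Polynomial.C_pow]
    have cC : (Polynomial.C (φL ω₁K) * Polynomial.C (φL ω₂K) * Polynomial.C (φL ω₃K) :
        Polynomial C) = Polynomial.C xC ^ 2 - 2 := by
      rw [← Polynomial.C_mul, ← Polynomial.C_mul, hC', Polynomial.C_sub, Polynomial.C_pow,
        map_ofNat (Polynomial.C : C →+* Polynomial C) 2]
    have hmap : Λ.map ψ = (Polynomial.X - Polynomial.C (φL ω₁K))
        * (Polynomial.X - Polynomial.C (φL ω₂K)) * (Polynomial.X - Polynomial.C (φL ω₃K)) := by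
      rw [hΛ]
      simp only [Polynomial.map_add, Polynomial.map_pow, Polynomial.map_mul, Polynomial.map_X,
        Polynomial.map_C, hψ1, hψ2, hψ3]
      simp only [map_add, map_neg, map_pow, map_one, map_ofNat]
      linear_combination (Polynomial.X ^ 2 : Polynomial C) * cA - Polynomial.X * cB + cC
    rw [hmap, Polynomial.roots_mul (mul_ne_zero
        (mul_ne_zero (Polynomial.X_sub_C_ne_zero _) (Polynomial.X_sub_C_ne_zero _))
        (Polynomial.X_sub_C_ne_zero _)),
      Polynomial.roots_mul (mul_ne_zero (Polynomial.X_sub_C_ne_zero _)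
        (Polynomial.X_sub_C_ne_zero _)),
      Polynomial.roots_X_sub_C, Polynomial.roots_X_sub_C, Polynomial.roots_X_sub_C]
    rfl
  · rw [hcomp ω₁K hn1, ho1]; norm_num
  · rw [hcomp ω₂K hn2, ho2]; norm_num
  · rw [hcomp ω₁K hn1, ho1]; norm_num
  · rw [hcomp ω₂K hn2, ho2]; norm_num
  · rw [hcomp ω₃K hn3, ho3]; norm_num
end
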